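/- arXiv:math/0110165 — 3 statements merged into one kernel-verified Lean document; each statement's English description precedes it below -/
import Mathlib

section
/- Let q be a complex number with |q| < 1, let n ≥ 1 and m ≥ 0 be integers, and let μ be a partition with μ₁ ≤ n. Then q^{m(m−1)/2 + n(μ)} [n, m] [n, μ] = Σ_{λ} q^{n(λ)} [n, λ] ∏_{i≥1} [λ_i − λ_{i+1}, λ_i − μ_i], where the sum is over all partitions λ such that λ/μ is an m-horizontal strip, i.e. |λ| = |μ| + m and λ_i ≥ μ_i ≥ λ_{i+1} for all i ≥ 1 (the product over i is finite, and terms with λ₁ > n vanish by the convention [n, λ] = 0). -/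
open scoped BigOperators Classical

/-- The finite q-Pochhammer symbol `(x;q)_n = ∏_{j=0}^{n-1} (1 - x q^j)`. -/
noncomputable def qPoch (x q : ℂ) (n : ℕ) : ℂ :=
  ∏ j ∈ Finset.range n, (1 - x * q ^ j)

/-- Partitions: weakly decreasing sequences of naturals with finitely many nonzero terms
(index `i` carries `λ_{i+1}`). -/
def Ptn : Type :=
  {f : ℕ → ℕ // Antitone f ∧ ∃ N, ∀ i, N ≤ i → f i = 0}

/-- The size `|λ| = Σ_i λ_i` of a partition. -/
noncomputable def Ptn.size (L : Ptn) : ℕ := ∑' i, L.1 i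

/-- `n(λ) = Σ_i λ_i (λ_i - 1) / 2`. -/
noncomputable def Ptn.nfun (L : Ptn) : ℕ := ∑' i, Nat.choose (L.1 i) 2

/-- The Gaussian q-binomial coefficient `[n, m] = (q)_n / ((q)_{n-m} (q)_m)`,
with the convention that it vanishes when `m > n`. -/
noncomputable def gaussBinom (q : ℂ) (n m : ℕ) : ℂ :=
  if m ≤ n then qPoch q q n / (qPoch q q (n - m) * qPoch q q m) else 0

/-- The q-binomial coefficient `[n, λ] = (q)_n / ((q)_{n-λ₁} (q)_λ)` for a partition `λ`,
with the convention that it vanishes when `λ₁ > n`. -/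
noncomputable def qBinomP (q : ℂ) (n : ℕ) (L : Ptn) : ℂ :=
  if L.1 0 ≤ n then
    qPoch q q n / (qPoch q q (n - L.1 0) * ∏' i : ℕ, qPoch q q (L.1 i - L.1 (i + 1)))
  else 0

/-- `λ/μ` is an `m`-horizontal strip: `|λ| = |μ| + m` and `λ_i ≥ μ_i ≥ λ_{i+1}` for all `i`. -/
def IsHorizontalStrip (L M : Ptn) (m : ℕ) : Prop :=
  L.size = M.size + m ∧ ∀ i, M.1 i ≤ L.1 i ∧ L.1 (i + 1) ≤ M.1 i

namespace QP
variable {q : ℂ} (hq : ‖q‖ < 1)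

lemma qPoch_zero (x : ℂ) : qPoch x q 0 = 1 := by simp [qPoch]

lemma qPoch_succ (x : ℂ) (n : ℕ) : qPoch x q (n + 1) = qPoch x q n * (1 - x * q ^ n) := by
  simp [qPoch, Finset.prod_range_succ]

include hq in
lemma qPoch_ne_zero (n : ℕ) : qPoch q q n ≠ 0 := by
  rw [qPoch]
  apply Finset.prod_ne_zero_iff.2
  intro j _
  have h1 : ‖q * q ^ j‖ < 1 := by
    calc ‖q * q ^ j‖ = ‖q‖ * ‖q‖ ^ j := by
          simp [map_mul, map_pow]
      _ ≤ ‖q‖ * 1 := by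
          apply mul_le_mul_of_nonneg_left _ (norm_nonneg q)
          exact pow_le_one₀ (norm_nonneg q) hq.le
      _ < 1 := by simpa using hq
  intro h
  have : q * q ^ j = 1 := by linear_combination -h
  rw [this] at h1; simp at h1

lemma gauss_of_le {n m : ℕ} (h : m ≤ n) :
    gaussBinom q n m = qPoch q q n / (qPoch q q (n - m) * qPoch q q m) := if_pos h

lemma gauss_of_lt {n m : ℕ} (h : n < m) : gaussBinom q n m = 0 := if_neg (by omega)

include hq in
lemma gauss_zero_right (n : ℕ) : gaussBinom q n 0 = 1 := by
  rw [gauss_of_le (Nat.zero_le n)]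
  simp [qPoch_zero, div_self (qPoch_ne_zero hq n)]

include hq in
lemma gauss_self (n : ℕ) : gaussBinom q n n = 1 := by
  rw [gauss_of_le le_rfl]
  simp [qPoch_zero, div_self (qPoch_ne_zero hq n)]

lemma gauss_zero_left (m : ℕ) : gaussBinom q 0 m = if m = 0 then 1 else 0 := by
  rcases Nat.eq_zero_or_pos m with rfl | h
  · simp [gaussBinom, qPoch_zero]
  · rw [if_neg (by omega), gaussBinom, if_neg (by omega)]

lemma qPoch_succ' (n : ℕ) : qPoch q q (n + 1) = qPoch q q n * (1 - q ^ (n + 1)) := by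
  rw [qPoch_succ, ← pow_succ']

include hq in
lemma one_sub_qpow_ne_zero (n : ℕ) : (1 : ℂ) - q ^ (n + 1) ≠ 0 := by
  have := qPoch_ne_zero hq (n + 1)
  rw [qPoch_succ'] at this
  exact right_ne_zero_of_mul this

include hq in
/-- q-Pascal: `[n+1, k+1] = [n, k+1] + q^(n-k) [n, k]`. -/
lemma gauss_pascal (n k : ℕ) :
    gaussBinom q (n + 1) (k + 1) = gaussBinom q n (k + 1) + q ^ (n - k) * gaussBinom q n k := by
  rcases lt_or_ge n k with h | h
  · rw [gauss_of_lt (by omega), gauss_of_lt (by omega), gauss_of_lt h]; ring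
  rcases eq_or_lt_of_le h with rfl | h
  · rw [gauss_self hq, gauss_of_lt (by omega), gauss_self hq]; simp
  have hk1 : k + 1 ≤ n := h
  rw [gauss_of_le (by omega), gauss_of_le hk1, gauss_of_le (by omega)]
  have e1 : n + 1 - (k + 1) = n - k := by omega
  have e2 : n - (k + 1) = n - k - 1 := by omega
  rw [e1, e2]
  have hnk : n - k = (n - k - 1) + 1 := by omega
  have hsp : qPoch q q (n - k) = qPoch q q (n - k - 1) * (1 - q ^ (n - k)) := by
    rw [hnk, qPoch_succ', ← hnk]
  have hkp : qPoch q q (k + 1) = qPoch q q k * (1 - q ^ (k + 1)) := qPoch_succ' k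
  have hnp : qPoch q q (n + 1) = qPoch q q n * (1 - q ^ (n + 1)) := qPoch_succ' n
  have key : (q : ℂ) ^ (n + 1) = q ^ (n - k) * q ^ (k + 1) := by
    rw [← pow_add]; congr 1; omega
  have A := qPoch_ne_zero hq (n - k - 1)
  have B := qPoch_ne_zero hq k
  have E := qPoch_ne_zero hq n
  have hu : (1 : ℂ) - q ^ (n - k) ≠ 0 := by rw [hnk]; exact one_sub_qpow_ne_zero hq _
  have hv : (1 : ℂ) - q ^ (k + 1) ≠ 0 := one_sub_qpow_ne_zero hq k
  rw [hnp, hsp, hkp, key]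
  field_simp
  ring

include hq in
/-- q-Vandermonde: `[a+b, m] = Σ_j q^(j(b+j-m)) [a,j] [b,m-j]`. -/
lemma gauss_vandermonde (a b m : ℕ) :
    gaussBinom q (a + b) m
      = ∑ j ∈ Finset.range (m + 1),
          q ^ (j * (b + j - m)) * gaussBinom q a j * gaussBinom q b (m - j) := by
  induction a generalizing m with
  | zero =>
    rw [Finset.sum_eq_single 0]
    · simp [gauss_zero_left, gauss_zero_right hq]
    · intro j hj hj0
      rw [gauss_zero_left, if_neg hj0]; ring
    · intro h; simp at h
  | succ a IH =>
    rcases Nat.eq_zero_or_pos m with rfl | hm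
    · simp [gauss_zero_right hq]
    obtain ⟨m', rfl⟩ : ∃ m', m = m' + 1 := ⟨m - 1, by omega⟩
    have htop : a + 1 + b = (a + b) + 1 := by omega
    rw [htop, gauss_pascal hq]
    have hf0 : q ^ (0 * (b + 0 - (m' + 1))) * gaussBinom q (a + 1) 0 * gaussBinom q b (m' + 1 - 0)
        = q ^ (0 * (b + 0 - (m' + 1))) * gaussBinom q a 0 * gaussBinom q b (m' + 1 - 0) := by
      rw [gauss_zero_right hq, gauss_zero_right hq]
    have hsplit : ∀ j ∈ Finset.range (m' + 1),
        q ^ ((j + 1) * (b + (j + 1) - (m' + 1))) * gaussBinom q (a + 1) (j + 1)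
            * gaussBinom q b (m' + 1 - (j + 1))
        = q ^ ((j + 1) * (b + (j + 1) - (m' + 1))) * gaussBinom q a (j + 1)
            * gaussBinom q b (m' + 1 - (j + 1))
          + q ^ ((a + b) - m' + j * (b + j - m')) * gaussBinom q a j * gaussBinom q b (m' - j) := by
      intro j hj
      rw [Finset.mem_range] at hj
      rw [gauss_pascal hq, mul_add, add_mul]
      congr 1
      have e1 : m' + 1 - (j + 1) = m' - j := by omega
      rw [e1]
      by_cases hja : j ≤ a
      · by_cases hbj : m' ≤ b + j
        · have he : (j + 1) * (b + (j + 1) - (m' + 1)) + (a - j)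
              = (a + b) - m' + j * (b + j - m') := by
            have e2 : b + (j + 1) - (m' + 1) = b + j - m' := by omega
            rw [e2]
            have h2 : (b + j - m') + (a - j) = a + b - m' := by omega
            calc (j + 1) * (b + j - m') + (a - j)
                = j * (b + j - m') + ((b + j - m') + (a - j)) := by ring
              _ = j * (b + j - m') + (a + b - m') := by rw [h2]
              _ = (a + b) - m' + j * (b + j - m') := by ring
          rw [← he, pow_add]; ring
        · rw [gauss_of_lt (show b < m' - j by omega)]; ring
      · rw [gauss_of_lt (show a < j by omega)]; ring
    have hh : ∑ x ∈ Finset.range (m' + 1),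
          q ^ ((a + b) - m' + x * (b + x - m')) * gaussBinom q a x * gaussBinom q b (m' - x)
        = q ^ ((a + b) - m') * ∑ x ∈ Finset.range (m' + 1),
            q ^ (x * (b + x - m')) * gaussBinom q a x * gaussBinom q b (m' - x) := by
      rw [Finset.mul_sum]
      exact Finset.sum_congr rfl (fun x _ => by rw [pow_add]; ring)
    have expand : ∑ j ∈ Finset.range (m' + 1 + 1),
          q ^ (j * (b + j - (m' + 1))) * gaussBinom q (a + 1) j * gaussBinom q b (m' + 1 - j)
        = (∑ j ∈ Finset.range (m' + 1 + 1),
            q ^ (j * (b + j - (m' + 1))) * gaussBinom q a j * gaussBinom q b (m' + 1 - j))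
          + q ^ ((a + b) - m') * ∑ j ∈ Finset.range (m' + 1),
              q ^ (j * (b + j - m')) * gaussBinom q a j * gaussBinom q b (m' - j) := by
      rw [Finset.sum_range_succ' _ (m' + 1), hf0, Finset.sum_congr rfl hsplit,
        Finset.sum_add_distrib, hh]
      conv_rhs => rw [Finset.sum_range_succ'
        (fun j => q ^ (j * (b + j - (m' + 1))) * gaussBinom q a j * gaussBinom q b (m' + 1 - j))
        (m' + 1)]
      ring
    rw [expand, ← IH, ← IH]

lemma choose_two_add (j k : ℕ) : (j + k).choose 2 = j.choose 2 + k.choose 2 + j * k := by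
  induction k with
  | zero => simp
  | succ k ih =>
    have h1 : j + (k + 1) = (j + k) + 1 := by omega
    have k1 : (j + k + 1).choose 2 = (j + k).choose 1 + (j + k).choose 2 :=
      Nat.choose_succ_succ _ 1
    have k2 : (k + 1).choose 2 = k.choose 1 + k.choose 2 := Nat.choose_succ_succ _ 1
    have k3 : j * (k + 1) = j * k + j := by ring
    rw [h1, k1, k2, Nat.choose_one_right, Nat.choose_one_right, ih, k3]
    omega

end QP

noncomputable def Tsum (q : ℂ) : List ℕ → ℕ → ℂ
  | [], m => if m = 0 then 1 else 0
  | d :: ds, m => ∑ j ∈ Finset.range (m + 1),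
      q ^ (j.choose 2 + j * ds.sum) * gaussBinom q d j * Tsum q ds (m - j)

namespace QP
variable {q : ℂ} (hq : ‖q‖ < 1)

include hq in
lemma tsum_eval (ds : List ℕ) : ∀ m : ℕ, Tsum q ds m = q ^ m.choose 2 * gaussBinom q ds.sum m := by
  induction ds with
  | nil =>
    intro m
    rcases Nat.eq_zero_or_pos m with rfl | h
    · simp [Tsum, List.sum_nil, gauss_zero_right hq]
    · simp only [Tsum, List.sum_nil, if_neg (by omega : ¬ m = 0), gauss_zero_left,
        if_neg (by omega : ¬ m = 0), mul_zero]
  | cons d ds IH =>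
    intro m
    rw [Tsum, List.sum_cons]
    have hterm : ∀ j ∈ Finset.range (m + 1),
        q ^ (j.choose 2 + j * ds.sum) * gaussBinom q d j * Tsum q ds (m - j)
        = q ^ m.choose 2 *
            (q ^ (j * (ds.sum + j - m)) * gaussBinom q d j * gaussBinom q ds.sum (m - j)) := by
      intro j hj
      rw [Finset.mem_range] at hj
      rw [IH]
      by_cases hb : m - j ≤ ds.sum
      · have he : j.choose 2 + j * ds.sum + (m - j).choose 2
            = m.choose 2 + j * (ds.sum + j - m) := by
          have hm : m = j + (m - j) := by omega
          have hc : m.choose 2 = j.choose 2 + (m - j).choose 2 + j * (m - j) := by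
            conv_lhs => rw [hm]
            exact choose_two_add j (m - j)
          have hsplit : (m - j) + (ds.sum + j - m) = ds.sum := by omega
          have : j * (m - j) + j * (ds.sum + j - m) = j * ds.sum := by
            rw [← Nat.mul_add, hsplit]
          omega
        calc q ^ (j.choose 2 + j * ds.sum) * gaussBinom q d j
              * (q ^ ((m - j).choose 2) * gaussBinom q ds.sum (m - j))
            = q ^ (j.choose 2 + j * ds.sum + (m - j).choose 2) * gaussBinom q d j
                * gaussBinom q ds.sum (m - j) := by rw [pow_add, pow_add]; ring
          _ = _ := by rw [he, pow_add]; ring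
      · rw [gauss_of_lt (show ds.sum < m - j by omega)]; ring
    rw [Finset.sum_congr rfl hterm, ← Finset.mul_sum, ← gauss_vandermonde hq]

lemma sum_piAntidiag_range_succ (k m : ℕ) (F : (ℕ → ℕ) → ℂ) :
    ∑ f ∈ Finset.piAntidiag (Finset.range (k + 1)) m, F f
      = ∑ j ∈ Finset.range (m + 1), ∑ g ∈ Finset.piAntidiag (Finset.range k) (m - j),
          F (fun i => if i = 0 then j else g (i - 1)) := by
  rw [Finset.sum_sigma']
  apply Finset.sum_nbij' (i := fun f => (⟨f 0, fun i => f (i + 1)⟩ : Σ _ : ℕ, (ℕ → ℕ)))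
    (j := fun p => fun i => if i = 0 then p.1 else p.2 (i - 1))
  · intro f hf
    rw [Finset.mem_piAntidiag] at hf
    obtain ⟨hsum, hsupp⟩ := hf
    rw [Finset.sum_range_succ'] at hsum
    have hf0 : f 0 ≤ m := by omega
    rw [Finset.mem_sigma]
    dsimp only
    refine ⟨Finset.mem_range.2 (by omega), ?_⟩
    rw [Finset.mem_piAntidiag]
    constructor
    · omega
    · intro i hi
      have := hsupp (i + 1) hi
      rw [Finset.mem_range] at this ⊢
      omega
  · intro p hp
    rw [Finset.mem_sigma, Finset.mem_range, Finset.mem_piAntidiag] at hp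
    obtain ⟨hj, hsum, hsupp⟩ := hp
    rw [Finset.mem_piAntidiag]
    constructor
    · rw [Finset.sum_range_succ']
      have h0 : (if (0:ℕ) = 0 then p.1 else p.2 (0 - 1)) = p.1 := if_pos rfl
      have hsucc : ∀ i : ℕ, (if i + 1 = 0 then p.1 else p.2 (i + 1 - 1)) = p.2 i := by
        intro i; rw [if_neg (Nat.succ_ne_zero i), Nat.add_sub_cancel]
      rw [h0, Finset.sum_congr rfl (fun i _ => hsucc i)]
      omega
    · intro i hi
      rcases Nat.eq_zero_or_pos i with rfl | h
      · exact Finset.mem_range.2 (by omega)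
      · rw [if_neg (by omega)] at hi
        have := hsupp (i - 1) hi
        rw [Finset.mem_range] at this ⊢
        omega
  · intro f _
    funext i
    cases i with
    | zero => simp
    | succ i => simp
  · rintro ⟨j, g⟩ _
    simp
  · intro f _
    congr 1
    funext i
    cases i with
    | zero => simp
    | succ i => simp

lemma tsum_eq_sum_piAntidiag (ds : List ℕ) : ∀ m : ℕ,
    ∑ f ∈ Finset.piAntidiag (Finset.range ds.length) m, ∏ i ∈ Finset.range ds.length,
        (q ^ ((f i).choose 2 + f i * (ds.drop (i + 1)).sum) * gaussBinom q (ds.getD i 0) (f i))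
      = Tsum q ds m := by
  induction ds with
  | nil =>
    intro m
    rcases Nat.eq_zero_or_pos m with rfl | h
    · simp [Tsum]
    · rw [List.length_nil, Finset.range_zero, Finset.piAntidiag_empty_of_ne_zero (by omega)]
      simp only [Finset.sum_empty, Tsum, if_neg (by omega : ¬ m = 0)]
  | cons d ds IH =>
    intro m
    rw [List.length_cons, sum_piAntidiag_range_succ]
    rw [Tsum]
    apply Finset.sum_congr rfl
    intro j hj
    rw [← IH (m - j), Finset.mul_sum]
    apply Finset.sum_congr rfl
    intro g hg
    rw [Finset.prod_range_succ' _ ds.length]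
    simp only [Nat.succ_ne_zero, if_false, if_true, reduceIte, Nat.add_sub_cancel,
      List.drop_succ_cons, List.getD_cons_succ, List.getD_cons_zero, List.drop_zero]
    ring

end QP

namespace QP
variable {q : ℂ} (hq : ‖q‖ < 1)

include hq in
/-- The per-term algebraic identity. -/
lemma perterm (n K : ℕ) (μf θ : ℕ → ℕ) (hanti : ∀ i, μf (i + 1) ≤ μf i)
    (hK : ∀ i, K ≤ i → μf i = 0) (hmun : μf 0 ≤ n)
    (hsupp : ∀ i, K + 1 ≤ i → θ i = 0) (hP : ∀ i, θ (i + 1) ≤ μf i - μf (i + 1)) :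
    q ^ (∑ i ∈ Finset.range (K + 1), (μf i + θ i).choose 2) *
      (if μf 0 + θ 0 ≤ n then
        qPoch q q n / (qPoch q q (n - (μf 0 + θ 0)) *
          ∏ i ∈ Finset.range (K + 1), qPoch q q ((μf i + θ i) - (μf (i+1) + θ (i+1))))
       else 0) *
      ∏ i ∈ Finset.range (K + 1), gaussBinom q ((μf i + θ i) - (μf (i+1) + θ (i+1))) (θ i)
    = q ^ (∑ i ∈ Finset.range (K + 1), (μf i).choose 2) *
        (qPoch q q n / (qPoch q q (n - μf 0) *
          ∏ i ∈ Finset.range (K + 1), qPoch q q (μf i - μf (i+1)))) *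
        ∏ i ∈ Finset.range (K + 1),
          (q ^ ((θ i).choose 2 + θ i * μf i) *
            gaussBinom q (if i = 0 then n - μf 0 else μf (i-1) - μf i) (θ i)) := by
  have hLmu : ∀ i, μf (i + 1) + θ (i + 1) ≤ μf i := by
    intro i; have h1 := hP i; have h2 := hanti i; omega
  have hθK : θ (K + 1) = 0 := hsupp (K + 1) le_rfl
  have hμK : μf K = 0 := hK K le_rfl
  have hμK1 : μf (K + 1) = 0 := hK (K + 1) (by omega)
  by_cases h0 : μf 0 + θ 0 ≤ n
  swap
  · rw [if_neg h0]
    have hz : ∏ i ∈ Finset.range (K + 1),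
        (q ^ ((θ i).choose 2 + θ i * μf i) *
          gaussBinom q (if i = 0 then n - μf 0 else μf (i-1) - μf i) (θ i)) = 0 :=
      Finset.prod_eq_zero (Finset.mem_range.2 (show 0 < K + 1 by omega))
        (by rw [if_pos rfl, gauss_of_lt (show n - μf 0 < θ 0 by omega), mul_zero])
    rw [hz]
    ring
  rw [if_pos h0]
  -- Step 1: exponents
  have hexp : ∑ i ∈ Finset.range (K + 1), (μf i + θ i).choose 2
      = (∑ i ∈ Finset.range (K + 1), (μf i).choose 2)
        + ∑ i ∈ Finset.range (K + 1), ((θ i).choose 2 + θ i * μf i) := by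
    rw [← Finset.sum_add_distrib]
    exact Finset.sum_congr rfl fun i _ => by rw [choose_two_add]; ring
  -- Step 2: strip gauss factors
  have hstrip : ∀ i ∈ Finset.range (K + 1),
      gaussBinom q ((μf i + θ i) - (μf (i+1) + θ (i+1))) (θ i)
        = qPoch q q ((μf i + θ i) - (μf (i+1) + θ (i+1)))
            / (qPoch q q (μf i - (μf (i+1) + θ (i+1))) * qPoch q q (θ i)) := by
    intro i _
    have h1 := hLmu i
    have e1 : (μf i + θ i) - (μf (i+1) + θ (i+1)) - θ i = μf i - (μf (i+1) + θ (i+1)) := by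
      omega
    rw [gauss_of_le (by omega), e1, mul_comm]
  -- Step 3: dd gauss factors
  have hdd : ∀ i ∈ Finset.range (K + 1),
      q ^ ((θ i).choose 2 + θ i * μf i) *
        gaussBinom q (if i = 0 then n - μf 0 else μf (i-1) - μf i) (θ i)
        = q ^ ((θ i).choose 2 + θ i * μf i) *
          (qPoch q q (if i = 0 then n - μf 0 else μf (i-1) - μf i)
            / (qPoch q q ((if i = 0 then n - μf 0 else μf (i-1) - μf i) - θ i)
                * qPoch q q (θ i))) := by
    intro i _
    rcases Nat.eq_zero_or_pos i with rfl | h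
    · rw [if_pos rfl, gauss_of_le (by omega)]
    · obtain ⟨i', rfl⟩ : ∃ i', i = i' + 1 := ⟨i - 1, by omega⟩
      rw [if_neg (by omega), gauss_of_le (by simpa using hP i')]
  rw [Finset.prod_congr rfl hstrip, Finset.prod_congr rfl hdd]
  -- split products
  have hsplit1 : ∏ x ∈ Finset.range (K + 1),
      qPoch q q ((μf x + θ x) - (μf (x+1) + θ (x+1)))
        / (qPoch q q (μf x - (μf (x+1) + θ (x+1))) * qPoch q q (θ x))
      = (∏ x ∈ Finset.range (K + 1), qPoch q q ((μf x + θ x) - (μf (x+1) + θ (x+1))))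
        / ((∏ x ∈ Finset.range (K + 1), qPoch q q (μf x - (μf (x+1) + θ (x+1))))
            * ∏ x ∈ Finset.range (K + 1), qPoch q q (θ x)) := by
    rw [Finset.prod_div_distrib, Finset.prod_mul_distrib]
  have hsplit2 : ∏ i ∈ Finset.range (K + 1),
      (q ^ ((θ i).choose 2 + θ i * μf i) *
        (qPoch q q (if i = 0 then n - μf 0 else μf (i-1) - μf i)
          / (qPoch q q ((if i = 0 then n - μf 0 else μf (i-1) - μf i) - θ i)
              * qPoch q q (θ i))))
      = q ^ (∑ i ∈ Finset.range (K + 1), ((θ i).choose 2 + θ i * μf i)) *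
        ((∏ i ∈ Finset.range (K + 1), qPoch q q (if i = 0 then n - μf 0 else μf (i-1) - μf i))
          / ((∏ i ∈ Finset.range (K + 1),
                qPoch q q ((if i = 0 then n - μf 0 else μf (i-1) - μf i) - θ i))
              * ∏ i ∈ Finset.range (K + 1), qPoch q q (θ i))) := by
    rw [Finset.prod_mul_distrib, Finset.prod_pow_eq_pow_sum, Finset.prod_div_distrib,
      Finset.prod_mul_distrib]
  rw [hsplit1, hsplit2]
  -- product identities
  have hPdd : ∏ i ∈ Finset.range (K + 1),
      qPoch q q (if i = 0 then n - μf 0 else μf (i-1) - μf i)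
      = qPoch q q (n - μf 0) * ∏ i ∈ Finset.range K, qPoch q q (μf i - μf (i+1)) := by
    rw [Finset.prod_range_succ']
    rw [Finset.prod_congr rfl (fun i (_ : i ∈ Finset.range K) => by
      rw [if_neg (Nat.succ_ne_zero i), Nat.add_sub_cancel] : ∀ i ∈ Finset.range K,
        qPoch q q (if i + 1 = 0 then n - μf 0 else μf (i+1-1) - μf (i+1))
          = qPoch q q (μf i - μf (i+1)))]
    rw [if_pos rfl, mul_comm]
  have hPmu : ∏ i ∈ Finset.range (K + 1), qPoch q q (μf i - μf (i+1))
      = ∏ i ∈ Finset.range K, qPoch q q (μf i - μf (i+1)) := by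
    rw [Finset.prod_range_succ, show μf K - μf (K+1) = 0 by omega, qPoch_zero, mul_one]
  have hPddθ : ∏ i ∈ Finset.range (K + 1),
      qPoch q q ((if i = 0 then n - μf 0 else μf (i-1) - μf i) - θ i)
      = qPoch q q (n - (μf 0 + θ 0))
        * ∏ i ∈ Finset.range K, qPoch q q (μf i - (μf (i+1) + θ (i+1))) := by
    rw [Finset.prod_range_succ']
    rw [Finset.prod_congr rfl (fun i (_ : i ∈ Finset.range K) => by
      rw [if_neg (Nat.succ_ne_zero i), Nat.add_sub_cancel,
        show μf i - μf (i+1) - θ (i+1) = μf i - (μf (i+1) + θ (i+1)) by omega] :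
        ∀ i ∈ Finset.range K,
        qPoch q q ((if i + 1 = 0 then n - μf 0 else μf (i+1-1) - μf (i+1)) - θ (i+1))
          = qPoch q q (μf i - (μf (i+1) + θ (i+1))))]
    rw [if_pos rfl, show n - μf 0 - θ 0 = n - (μf 0 + θ 0) by omega, mul_comm]
  have hPM : ∏ i ∈ Finset.range (K + 1), qPoch q q (μf i - (μf (i+1) + θ (i+1)))
      = ∏ i ∈ Finset.range K, qPoch q q (μf i - (μf (i+1) + θ (i+1))) := by
    rw [Finset.prod_range_succ, show μf K - (μf (K+1) + θ (K+1)) = 0 by omega,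
      qPoch_zero, mul_one]
  rw [hPdd, hPmu, hPddθ, hPM, hexp, pow_add]
  -- final field computation
  have N1 := qPoch_ne_zero hq n
  have N2 := qPoch_ne_zero hq (n - (μf 0 + θ 0))
  have N3 := qPoch_ne_zero hq (n - μf 0)
  have N4 : (∏ x ∈ Finset.range (K + 1),
      qPoch q q ((μf x + θ x) - (μf (x+1) + θ (x+1)))) ≠ 0 :=
    Finset.prod_ne_zero_iff.2 fun i _ => qPoch_ne_zero hq _
  have N5 : (∏ i ∈ Finset.range K, qPoch q q (μf i - (μf (i+1) + θ (i+1)))) ≠ 0 :=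
    Finset.prod_ne_zero_iff.2 fun i _ => qPoch_ne_zero hq _
  have N6 : (∏ i ∈ Finset.range K, qPoch q q (μf i - μf (i+1))) ≠ 0 :=
    Finset.prod_ne_zero_iff.2 fun i _ => qPoch_ne_zero hq _
  have N7 : (∏ i ∈ Finset.range (K + 1), qPoch q q (θ i)) ≠ 0 :=
    Finset.prod_ne_zero_iff.2 fun i _ => qPoch_ne_zero hq _
  field_simp

end QP


theorem q_pieri (q : ℂ) (hq : ‖q‖ < 1) (n m : ℕ) (hn : 1 ≤ n)
    (mu : Ptn) (hmu : mu.1 0 ≤ n) :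
    q ^ (Nat.choose m 2 + mu.nfun) * gaussBinom q n m * qBinomP q n mu
      = ∑' L : {L : Ptn // IsHorizontalStrip L mu m},
          q ^ (L.1.nfun) * qBinomP q n L.1 *
            ∏' i : ℕ, gaussBinom q (L.1.1 i - L.1.1 (i + 1)) (L.1.1 i - mu.1 i) := by
  classical
  obtain ⟨K, hK⟩ := mu.2.2
  have hanti : ∀ i, mu.1 (i + 1) ≤ mu.1 i := fun i => mu.2.1 (Nat.le_succ i)
  have hantile : ∀ i j : ℕ, i ≤ j → mu.1 j ≤ mu.1 i := fun i j h => mu.2.1 h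
  have hmusupp : ∀ i, K + 1 ≤ i → mu.1 i = 0 := fun i hi => hK i (by omega)
  have hμK : mu.1 K = 0 := hK K le_rfl
  -- finite index set of difference vectors
  set A' : Finset (ℕ → ℕ) := (Finset.piAntidiag (Finset.range (K + 1)) m).filter
      (fun f => ∀ i : ℕ, f (i + 1) ≤ mu.1 i - mu.1 (i + 1)) with hA'def
  have hmemA : ∀ f, f ∈ A' ↔ ((∑ i ∈ Finset.range (K + 1), f i = m)
      ∧ (∀ i, f i ≠ 0 → i < K + 1) ∧ ∀ i : ℕ, f (i + 1) ≤ mu.1 i - mu.1 (i + 1)) := by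
    intro f
    rw [hA'def, Finset.mem_filter, Finset.mem_piAntidiag]
    simp only [Finset.mem_range, and_assoc]
  have hsuppA : ∀ f ∈ A', ∀ i, K + 1 ≤ i → f i = 0 := by
    intro f hf i hi
    by_contra hne
    have := ((hmemA f).1 hf).2.1 i hne
    omega
  -- tsum conversions
  have hts : ∀ g : ℕ → ℕ, (∀ i, K + 1 ≤ i → g i = 0) →
      ∑' i, g i = ∑ i ∈ Finset.range (K + 1), g i := by
    intro g h
    exact tsum_eq_sum (fun b hb => h b (le_of_not_gt (fun hlt => hb (Finset.mem_range.2 hlt))))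
  have hchoosets : ∀ g : ℕ → ℕ, (∀ i, K + 1 ≤ i → g i = 0) →
      (∑' i, (g i).choose 2) = ∑ i ∈ Finset.range (K + 1), (g i).choose 2 := by
    intro g h
    exact tsum_eq_sum (fun b hb => by
      rw [h b (le_of_not_gt (fun hlt => hb (Finset.mem_range.2 hlt)))]; rfl)

  have musize : mu.size = ∑ i ∈ Finset.range (K + 1), mu.1 i := hts _ hmusupp
  have hstripsupp : ∀ L : Ptn, IsHorizontalStrip L mu m → ∀ i, K + 1 ≤ i → L.1 i = 0 := by
    intro L hL i hi
    have h2 := (hL.2 (i - 1)).2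
    rw [show i - 1 + 1 = i by omega] at h2
    have h3 := hK (i - 1) (by omega)
    omega
  have hqB : ∀ L : Ptn, (∀ i, K + 1 ≤ i → L.1 i = 0) →
      qBinomP q n L = if L.1 0 ≤ n then
        qPoch q q n / (qPoch q q (n - L.1 0) *
          ∏ i ∈ Finset.range (K + 1), qPoch q q (L.1 i - L.1 (i + 1)))
      else 0 := by
    intro L h
    have hpr : (∏' i : ℕ, qPoch q q (L.1 i - L.1 (i + 1)))
        = ∏ i ∈ Finset.range (K + 1), qPoch q q (L.1 i - L.1 (i + 1)) := by
      refine tprod_eq_prod (fun b hb => ?_)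
      have hb' : K + 1 ≤ b := le_of_not_gt (fun hlt => hb (Finset.mem_range.2 hlt))
      rw [show L.1 b - L.1 (b + 1) = 0 by
        have := h b hb'; have := h (b + 1) (by omega); omega]
      exact QP.qPoch_zero q
    rw [qBinomP, hpr]
  -- the equivalence between difference vectors and horizontal strips
  let e : {f // f ∈ A'} ≃ {L : Ptn // IsHorizontalStrip L mu m} :=
  { toFun := fun x => ⟨⟨fun i => mu.1 i + x.1 i,
      antitone_nat_of_succ_le (fun i => by
        have h1 := ((hmemA x.1).1 x.2).2.2 i
        have h2 := hanti i
        show mu.1 (i + 1) + x.1 (i + 1) ≤ mu.1 i + x.1 i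
        omega),
      ⟨K + 1, fun i hi => by
        show mu.1 i + x.1 i = 0
        rw [hmusupp i hi, hsuppA x.1 x.2 i hi]⟩⟩, by
      constructor
      · show (∑' i, (mu.1 i + x.1 i)) = mu.size + m
        rw [hts _ (fun i hi => by rw [hmusupp i hi, hsuppA x.1 x.2 i hi]),
          Finset.sum_add_distrib, musize, ((hmemA x.1).1 x.2).1]
      · intro i
        refine ⟨Nat.le_add_right _ _, ?_⟩
        have h1 := ((hmemA x.1).1 x.2).2.2 i
        have h2 := hanti i
        show mu.1 (i + 1) + x.1 (i + 1) ≤ mu.1 i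
        omega⟩,
    invFun := fun y => ⟨fun i => y.1.1 i - mu.1 i, by
      rw [hmemA]
      have hmule : ∀ i, mu.1 i ≤ y.1.1 i := fun i => (y.2.2 i).1
      refine ⟨?_, ?_, ?_⟩
      · have h1 : (∑ i ∈ Finset.range (K + 1), (y.1.1 i - mu.1 i))
            + ∑ i ∈ Finset.range (K + 1), mu.1 i
            = ∑ i ∈ Finset.range (K + 1), y.1.1 i := by
          rw [← Finset.sum_add_distrib]
          exact Finset.sum_congr rfl fun i _ => by have := hmule i; omega
        have h2 : ∑ i ∈ Finset.range (K + 1), y.1.1 i = mu.size + m := by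
          rw [← hts _ (hstripsupp y.1 y.2)]; exact y.2.1
        rw [musize] at h2
        omega
      · intro i hne
        by_contra hge
        have hz1 := hstripsupp y.1 y.2 i (by omega)
        have hz2 := hmusupp i (by omega)
        omega
      · intro i
        have h1 := (y.2.2 i).2
        have h2 := (y.2.2 (i + 1)).1
        omega⟩,
    left_inv := fun x => Subtype.ext (funext fun i => by
      show mu.1 i + x.1 i - mu.1 i = x.1 i
      omega),
    right_inv := fun y => Subtype.ext (Subtype.ext (funext fun i => by
      show mu.1 i + (y.1.1 i - mu.1 i) = y.1.1 i
      have := (y.2.2 i).1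
      omega)) }
  -- list of differences
  set ds : List ℕ := (n - mu.1 0) :: List.ofFn (fun i : Fin K => mu.1 i - mu.1 (i + 1))
    with hdsdef
  have hlen : ds.length = K + 1 := by simp [hdsdef]
  have hdropaux : ∀ t j, j + t = K →
      ((List.ofFn (fun i : Fin K => mu.1 i - mu.1 (i + 1))).drop j).sum
        = mu.1 j - mu.1 K := by
    intro t
    induction t with
    | zero =>
      intro j hj
      have : j = K := by omega
      subst this
      rw [List.drop_eq_nil_of_le (by simp)]
      simp
    | succ t IH =>
      intro j hj
      have hjK : j < K := by omega
      rw [List.drop_eq_getElem_cons (by simpa using hjK), List.sum_cons, List.getElem_ofFn,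
        IH (j + 1) (by omega)]
      show (mu.1 j - mu.1 (j + 1)) + (mu.1 (j + 1) - mu.1 K) = mu.1 j - mu.1 K
      have h1 := hantile (j + 1) K (by omega)
      have h2 := hanti j
      omega
  have hdrop : ∀ i, i < K + 1 → ((ds.drop (i + 1)).sum) = mu.1 i := by
    intro i hi
    rw [hdsdef, List.drop_succ_cons, hdropaux (K - i) i (by omega), hμK]
    omega
  have hgetD : ∀ i, i < K + 1 →
      ds.getD i 0 = if i = 0 then n - mu.1 0 else mu.1 (i - 1) - mu.1 i := by
    intro i hi
    cases i with
    | zero => simp [hdsdef]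
    | succ i' =>
      rw [hdsdef, List.getD_cons_succ, if_neg (Nat.succ_ne_zero i'),
        List.getD_eq_getElem _ _ (by simp; omega), List.getElem_ofFn]
      simp
  have hsum : ds.sum = n := by
    have := hdropaux K 0 (by omega)
    rw [List.drop_zero] at this
    rw [hdsdef, List.sum_cons, this, hμK]
    omega
  -- the explicit value of each strip term
  set F : (ℕ → ℕ) → ℂ := fun f =>
    q ^ mu.nfun * qBinomP q n mu *
      ∏ i ∈ Finset.range (K + 1),
        (q ^ ((f i).choose 2 + f i * mu.1 i) *
          gaussBinom q (if i = 0 then n - mu.1 0 else mu.1 (i - 1) - mu.1 i) (f i))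
    with hFdef
  have hqBmu : qBinomP q n mu = qPoch q q n / (qPoch q q (n - mu.1 0) *
      ∏ i ∈ Finset.range (K + 1), qPoch q q (mu.1 i - mu.1 (i + 1))) := by
    rw [hqB mu hmusupp, if_pos hmu]
  have hmunfun : mu.nfun = ∑ i ∈ Finset.range (K + 1), (mu.1 i).choose 2 :=
    hchoosets _ hmusupp
  have key : ∀ x : {f // f ∈ A'},
      q ^ ((e x).1.nfun) * qBinomP q n (e x).1 *
        ∏' i : ℕ, gaussBinom q ((e x).1.1 i - (e x).1.1 (i + 1)) ((e x).1.1 i - mu.1 i)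
      = F x.1 := by
    rintro ⟨f, hf⟩
    have hfsupp : ∀ i, K + 1 ≤ i → f i = 0 := hsuppA f hf
    have hfP : ∀ i : ℕ, f (i + 1) ≤ mu.1 i - mu.1 (i + 1) := ((hmemA f).1 hf).2.2
    have hL1 : (e ⟨f, hf⟩).1.1 = fun i => mu.1 i + f i := rfl
    have hLsupp : ∀ i, K + 1 ≤ i → mu.1 i + f i = 0 := fun i hi => by
      rw [hmusupp i hi, hfsupp i hi]
    have hnf : (e ⟨f, hf⟩).1.nfun
        = ∑ i ∈ Finset.range (K + 1), (mu.1 i + f i).choose 2 := by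
      show (∑' i, ((mu.1 i + f i).choose 2)) = _
      exact hchoosets _ hLsupp
    have hqBL : qBinomP q n (e ⟨f, hf⟩).1 = if mu.1 0 + f 0 ≤ n then
        qPoch q q n / (qPoch q q (n - (mu.1 0 + f 0)) *
          ∏ i ∈ Finset.range (K + 1),
            qPoch q q ((mu.1 i + f i) - (mu.1 (i + 1) + f (i + 1))))
        else 0 := hqB _ hLsupp
    have hgpr : (∏' i : ℕ,
        gaussBinom q ((e ⟨f, hf⟩).1.1 i - (e ⟨f, hf⟩).1.1 (i + 1)) ((e ⟨f, hf⟩).1.1 i - mu.1 i))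
        = ∏ i ∈ Finset.range (K + 1),
            gaussBinom q ((mu.1 i + f i) - (mu.1 (i + 1) + f (i + 1))) (f i) := by
      have g00 : gaussBinom q 0 0 = 1 := by
        rw [QP.gauss_of_le le_rfl]
        simp [qPoch]
      rw [hL1]
      refine (tprod_eq_prod (fun b hb => ?_)).trans
        (Finset.prod_congr rfl (fun i _ => by
          show gaussBinom q ((mu.1 i + f i) - (mu.1 (i + 1) + f (i + 1)))
              ((mu.1 i + f i) - mu.1 i) = _
          rw [show mu.1 i + f i - mu.1 i = f i by omega]))
      show gaussBinom q ((mu.1 b + f b) - (mu.1 (b + 1) + f (b + 1)))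
          ((mu.1 b + f b) - mu.1 b) = 1
      have hb' : K + 1 ≤ b := le_of_not_gt (fun hlt => hb (Finset.mem_range.2 hlt))
      rw [hmusupp b hb', hfsupp b hb', hmusupp (b + 1) (by omega), hfsupp (b + 1) (by omega)]
      simpa using g00
    rw [hnf, hqBL, hgpr]
    show _ = q ^ mu.nfun * qBinomP q n mu *
      ∏ i ∈ Finset.range (K + 1),
        (q ^ ((f i).choose 2 + f i * mu.1 i) *
          gaussBinom q (if i = 0 then n - mu.1 0 else mu.1 (i - 1) - mu.1 i) (f i))
    rw [hqBmu, hmunfun]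
    exact QP.perterm hq n K mu.1 f hanti hK hmu hfsupp hfP
  -- assemble
  have hFne : ∀ f ∈ Finset.piAntidiag (Finset.range (K + 1)) m, F f ≠ 0 →
      ∀ i : ℕ, f (i + 1) ≤ mu.1 i - mu.1 (i + 1) := by
    intro f hfp hFne i
    by_contra hgt
    rw [Finset.mem_piAntidiag] at hfp
    have hiK : i + 1 < K + 1 := by
      by_contra hge
      have : f (i + 1) = 0 := by
        by_contra hne
        have := hfp.2 _ hne
        rw [Finset.mem_range] at this
        omega
      omega
    apply hFne
    show q ^ mu.nfun * qBinomP q n mu *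
      ∏ i ∈ Finset.range (K + 1),
        (q ^ ((f i).choose 2 + f i * mu.1 i) *
          gaussBinom q (if i = 0 then n - mu.1 0 else mu.1 (i - 1) - mu.1 i) (f i)) = 0
    have : ∏ j ∈ Finset.range (K + 1),
        (q ^ ((f j).choose 2 + f j * mu.1 j) *
          gaussBinom q (if j = 0 then n - mu.1 0 else mu.1 (j - 1) - mu.1 j) (f j)) = 0 := by
      refine Finset.prod_eq_zero (Finset.mem_range.2 hiK) ?_
      rw [if_neg (Nat.succ_ne_zero i), Nat.add_sub_cancel,
        QP.gauss_of_lt (show mu.1 i - mu.1 (i + 1) < f (i + 1) by omega), mul_zero]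
    rw [this, mul_zero]
  have main : (∑' L : {L : Ptn // IsHorizontalStrip L mu m},
        q ^ (L.1.nfun) * qBinomP q n L.1 *
          ∏' i : ℕ, gaussBinom q (L.1.1 i - L.1.1 (i + 1)) (L.1.1 i - mu.1 i))
      = q ^ mu.nfun * qBinomP q n mu * (q ^ m.choose 2 * gaussBinom q n m) := by
    rw [← e.tsum_eq]
    rw [tsum_congr key, Finset.tsum_subtype A' F]
    rw [hA'def, Finset.sum_filter_of_ne hFne]
    have hbody : ∀ f ∈ Finset.piAntidiag (Finset.range (K + 1)) m, F f
        = q ^ mu.nfun * qBinomP q n mu *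
          ∏ i ∈ Finset.range ds.length,
            (q ^ ((f i).choose 2 + f i * (ds.drop (i + 1)).sum) *
              gaussBinom q (ds.getD i 0) (f i)) := by
      intro f _
      show q ^ mu.nfun * qBinomP q n mu *
        ∏ i ∈ Finset.range (K + 1),
          (q ^ ((f i).choose 2 + f i * mu.1 i) *
            gaussBinom q (if i = 0 then n - mu.1 0 else mu.1 (i - 1) - mu.1 i) (f i)) = _
      rw [hlen]
      congr 1
      refine Finset.prod_congr rfl (fun i hi => ?_)
      rw [Finset.mem_range] at hi
      rw [hdrop i hi, hgetD i hi]
    rw [Finset.sum_congr rfl hbody, ← Finset.mul_sum,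
      show (K + 1) = ds.length from hlen.symm,
      QP.tsum_eq_sum_piAntidiag ds m, QP.tsum_eval hq ds m, hsum]
  rw [main, pow_add]
  ring
end

section
/- Let q, z be complex numbers with |q| < 1 and |z| < 1, and let n ≥ 0 be an integer. Then Σ_{λ} z^{|λ|} q^{2n(λ)} [n, λ] = 1 / (z;q)_n, where the sum is over all partitions λ (only those with λ₁ ≤ n contribute, by the convention on q-binomial coefficients). -/
open scoped BigOperators Classical

namespace HallAux

lemma qPoch_succ (x q : ℂ) (n : ℕ) :
    qPoch x q (n+1) = qPoch x q n * (1 - x * q ^ n) := Finset.prod_range_succ _ n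

lemma qPoch_add (x q : ℂ) (a b : ℕ) :
    qPoch x q (a + b) = qPoch x q a * qPoch (x * q ^ a) q b := by
  rw [qPoch, Finset.prod_range_add]
  congr 1
  refine Finset.prod_congr rfl fun j _ => ?_
  rw [mul_assoc, ← pow_add]

lemma qPoch_ne_zero {x q : ℂ} (hx : ‖x‖ < 1) (hq : ‖q‖ < 1) (n : ℕ) :
    qPoch x q n ≠ 0 := by
  refine Finset.prod_ne_zero_iff.2 fun j _ => ?_
  intro h
  have h1 : x * q ^ j = 1 := by linear_combination -h
  have := congrArg norm h1
  rw [norm_mul, norm_pow, norm_one] at this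
  nlinarith [(pow_le_one₀ (norm_nonneg q) hq.le : ‖q‖ ^ j ≤ 1),
    norm_nonneg x, pow_nonneg (norm_nonneg q) j]

lemma qq_ne_zero {q : ℂ} (hq : ‖q‖ < 1) (n : ℕ) : qPoch q q n ≠ 0 :=
  qPoch_ne_zero hq hq n

/-- The scalar q-binomial coefficient. -/
noncomputable def qb (q : ℂ) (n k : ℕ) : ℂ :=
  qPoch q q n / (qPoch q q (n - k) * qPoch q q k)

lemma qPoch_zero (x q : ℂ) : qPoch x q 0 = 1 := rfl

lemma qb_self {q : ℂ} (hq : ‖q‖ < 1) (n : ℕ) : qb q n n = 1 := by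
  rw [qb, Nat.sub_self, qPoch_zero, one_mul, div_self (qq_ne_zero hq n)]

lemma qb_zero {q : ℂ} (hq : ‖q‖ < 1) (n : ℕ) : qb q n 0 = 1 := by
  rw [qb, Nat.sub_zero, qPoch_zero, mul_one, div_self (qq_ne_zero hq n)]

lemma qb_ne_zero {q : ℂ} (hq : ‖q‖ < 1) (n k : ℕ) : qb q n k ≠ 0 :=
  div_ne_zero (qq_ne_zero hq n) (mul_ne_zero (qq_ne_zero hq _) (qq_ne_zero hq _))

/-- q-Pascal rule (interior case). -/
lemma qb_pascal {q : ℂ} (hq : ‖q‖ < 1) {n j : ℕ} (hj : j < n) :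
    qb q (n+1) (j+1) = qb q n (j+1) + q ^ (n - j) * qb q n j := by
  have e1 : qPoch q q (n+1) = qPoch q q n * (1 - q ^ (n+1)) := by
    rw [qPoch_succ, ← pow_succ']
  have e2 : n - j = (n - j - 1) + 1 := by omega
  have e3 : qPoch q q (n - j) = qPoch q q (n - j - 1) * (1 - q ^ (n - j)) := by
    conv_lhs => rw [e2, qPoch_succ, ← pow_succ', ← e2]
  have e4 : qPoch q q (j+1) = qPoch q q j * (1 - q ^ (j+1)) := by
    rw [qPoch_succ, ← pow_succ']
  have h5 : n + 1 - (j + 1) = n - j := by omega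
  have h6 : n - (j + 1) = n - j - 1 := by omega
  rw [qb, qb, qb, h5, h6, e1, e3, e4]
  have hnz1 := qq_ne_zero hq n
  have hnz2 := qq_ne_zero hq (n - j - 1)
  have hnz3 := qq_ne_zero hq j
  have hnzq : (1 - q ^ (n - j)) ≠ 0 := by
    intro h
    have h1 : q ^ (n - j) = 1 := by linear_combination -h
    have := congrArg norm h1
    rw [norm_pow, norm_one] at this
    nlinarith [(pow_le_one₀ (norm_nonneg q) hq.le : ‖q‖ ^ (n-j) ≤ 1),
      pow_nonneg (norm_nonneg q) (n-j),
      (pow_lt_one₀ (norm_nonneg q) hq (by omega : n - j ≠ 0) : ‖q‖ ^ (n-j) < 1)]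
  have hnzq2 : (1 - q ^ (j+1)) ≠ 0 := by
    intro h
    have h1 : q ^ (j+1) = 1 := by linear_combination -h
    have := congrArg norm h1
    rw [norm_pow, norm_one] at this
    nlinarith [(pow_lt_one₀ (norm_nonneg q) hq (by omega : j + 1 ≠ 0) : ‖q‖ ^ (j+1) < 1),
      pow_nonneg (norm_nonneg q) (j+1)]
  have key : q ^ (n - j) * q ^ (j + 1) = q ^ (n + 1) := by
    rw [← pow_add]; congr 1; omega
  rw [← key]
  field_simp
  ring


section FiniteIdentity

lemma choose_two_succ (j : ℕ) : Nat.choose (j+1) 2 = Nat.choose j 2 + j := by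
  rw [Nat.choose_succ_succ, Nat.choose_one_right, Nat.add_comm]

/-- The polynomial form of the key finite identity. -/
lemma Gsum {q : ℂ} (hq : ‖q‖ < 1) (n : ℕ) : ∀ z : ℂ,
    ∑ k ∈ Finset.range (n+1),
      qb q n k * q ^ (2 * Nat.choose k 2) * z ^ k * qPoch (z * q ^ k) q (n - k) = 1 := by
  induction n with
  | zero =>
    intro z
    simp [qb_self hq, qPoch_zero]
  | succ n ih =>
    intro z
    have peel0 : ∑ k ∈ Finset.range (n+2),
        qb q (n+1) k * q ^ (2 * Nat.choose k 2) * z ^ k * qPoch (z * q ^ k) q (n+1-k)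
        = (∑ j ∈ Finset.range (n+1),
            qb q (n+1) (j+1) * q ^ (2 * Nat.choose (j+1) 2) * z ^ (j+1)
              * qPoch (z * q ^ (j+1)) q (n-j))
          + qPoch z q (n+1) := by
      rw [Finset.sum_range_succ']
      simp [qb_zero hq]
    rw [peel0, Finset.sum_range_succ]
    -- identify the top term
    have htop : qb q (n+1) (n+1) * q ^ (2 * Nat.choose (n+1) 2) * z ^ (n+1)
        * qPoch (z * q ^ (n+1)) q (n-n) = q ^ (2 * Nat.choose (n+1) 2) * z ^ (n+1) := by
      rw [qb_self hq, Nat.sub_self, qPoch_zero]; ring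
    rw [htop]
    -- A-part and B-part
    have hA : (1 - z * q ^ n) * (∑ k ∈ Finset.range (n+1),
        qb q n k * q ^ (2 * Nat.choose k 2) * z ^ k * qPoch (z * q ^ k) q (n - k))
        = qPoch z q (n+1) + ∑ j ∈ Finset.range n,
            qb q n (j+1) * q ^ (2 * Nat.choose (j+1) 2) * z ^ (j+1)
              * qPoch (z * q ^ (j+1)) q (n-j) := by
      rw [Finset.mul_sum]
      have congrA : ∀ k ∈ Finset.range (n+1),
          (1 - z * q ^ n) * (qb q n k * q ^ (2 * Nat.choose k 2) * z ^ k
            * qPoch (z * q ^ k) q (n - k))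
          = qb q n k * q ^ (2 * Nat.choose k 2) * z ^ k * qPoch (z * q ^ k) q (n + 1 - k) := by
        intro k hk
        rw [Finset.mem_range] at hk
        have h1 : n + 1 - k = (n - k) + 1 := by omega
        rw [h1, qPoch_succ]
        have h2 : z * q ^ k * q ^ (n - k) = z * q ^ n := by
          rw [mul_assoc, ← pow_add]
          congr 2
          omega
        rw [h2]; ring
      rw [Finset.sum_congr rfl congrA, Finset.sum_range_succ']
      have h0 : qb q n 0 * q ^ (2 * Nat.choose 0 2) * z ^ 0 * qPoch (z * q ^ 0) q (n + 1 - 0)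
          = qPoch z q (n+1) := by simp [qb_zero hq]
      rw [h0, add_comm]
      congr 1
      refine Finset.sum_congr rfl fun j hj => ?_
      have hjx : n + 1 - (j + 1) = n - j := by omega
      rw [hjx]
    have hB : z * q ^ n * (∑ k ∈ Finset.range (n+1),
        qb q n k * q ^ (2 * Nat.choose k 2) * (z*q) ^ k * qPoch (z * q * q ^ k) q (n - k))
        = (∑ j ∈ Finset.range n,
            q ^ (n-j) * qb q n j * q ^ (2 * Nat.choose (j+1) 2) * z ^ (j+1)
              * qPoch (z * q ^ (j+1)) q (n-j))
          + q ^ (2 * Nat.choose (n+1) 2) * z ^ (n+1) := by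
      rw [Finset.mul_sum, Finset.sum_range_succ]
      congr 1
      · refine Finset.sum_congr rfl fun j hj => ?_
        rw [Finset.mem_range] at hj
        have h2 : z * q * q ^ j = z * q ^ (j+1) := by rw [mul_assoc, ← pow_succ']
        rw [h2]
        have e1 : (2 * Nat.choose (j+1) 2) = 2 * Nat.choose j 2 + 2*j := by
          rw [choose_two_succ]; ring
        have e2 : q ^ (n - j) * q ^ (2 * Nat.choose (j+1) 2)
            = q ^ n * q ^ (2 * Nat.choose j 2) * q ^ j := by
          rw [← pow_add, ← pow_add, ← pow_add, e1]
          congr 1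
          omega
        rw [mul_pow]
        calc z * q ^ n * (qb q n j * q ^ (2 * Nat.choose j 2) * (z ^ j * q ^ j)
              * qPoch (z * q ^ (j+1)) q (n - j))
            = (q ^ n * q ^ (2 * Nat.choose j 2) * q ^ j) * qb q n j * z ^ (j+1)
              * qPoch (z * q ^ (j+1)) q (n - j) := by ring
          _ = _ := by rw [← e2]; ring
      · rw [qb_self hq, Nat.sub_self, qPoch_zero]
        have e1 : (2 * Nat.choose (n+1) 2) = 2 * Nat.choose n 2 + 2*n := by
          rw [choose_two_succ]; ring
        rw [mul_pow, e1, pow_add]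
        ring
    have key : ∑ j ∈ Finset.range n,
        qb q (n+1) (j+1) * q ^ (2 * Nat.choose (j+1) 2) * z ^ (j+1)
          * qPoch (z * q ^ (j+1)) q (n-j)
        = (∑ j ∈ Finset.range n, qb q n (j+1) * q ^ (2 * Nat.choose (j+1) 2) * z ^ (j+1)
              * qPoch (z * q ^ (j+1)) q (n-j))
          + ∑ j ∈ Finset.range n, q ^ (n-j) * qb q n j * q ^ (2 * Nat.choose (j+1) 2) * z ^ (j+1)
              * qPoch (z * q ^ (j+1)) q (n-j) := by
      rw [← Finset.sum_add_distrib]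
      refine Finset.sum_congr rfl fun j hj => ?_
      rw [Finset.mem_range] at hj
      rw [qb_pascal hq hj]
      ring
    rw [key]
    have ihz := ih z
    have ihzq := ih (z*q)
    calc (∑ j ∈ Finset.range n, qb q n (j+1) * q ^ (2 * Nat.choose (j+1) 2) * z ^ (j+1)
              * qPoch (z * q ^ (j+1)) q (n-j))
          + (∑ j ∈ Finset.range n, q ^ (n-j) * qb q n j * q ^ (2 * Nat.choose (j+1) 2) * z ^ (j+1)
              * qPoch (z * q ^ (j+1)) q (n-j))
          + q ^ (2 * Nat.choose (n+1) 2) * z ^ (n+1) + qPoch z q (n+1)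
        = ((1 - z * q ^ n) * (∑ k ∈ Finset.range (n+1),
            qb q n k * q ^ (2 * Nat.choose k 2) * z ^ k * qPoch (z * q ^ k) q (n - k)))
          + (z * q ^ n * (∑ k ∈ Finset.range (n+1),
            qb q n k * q ^ (2 * Nat.choose k 2) * (z*q) ^ k * qPoch (z * q * q ^ k) q (n - k))) := by
          rw [hA, hB]; ring
      _ = 1 := by rw [ihz, ihzq]; ring

/-- The key finite identity in inverse form. -/
lemma finite_identity {q z : ℂ} (hq : ‖q‖ < 1) (hz : ‖z‖ < 1) (n : ℕ) :
    ∑ k ∈ Finset.range (n+1),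
      qb q n k * q ^ (2 * Nat.choose k 2) * z ^ k * (qPoch z q k)⁻¹
      = (qPoch z q n)⁻¹ := by
  have hzn := qPoch_ne_zero hz hq
  have step : ∀ k ∈ Finset.range (n+1),
      qb q n k * q ^ (2 * Nat.choose k 2) * z ^ k * (qPoch z q k)⁻¹
      = (qb q n k * q ^ (2 * Nat.choose k 2) * z ^ k * qPoch (z * q ^ k) q (n - k))
        * (qPoch z q n)⁻¹ := by
    intro k hk
    rw [Finset.mem_range] at hk
    have hsplit : qPoch z q n = qPoch z q k * qPoch (z * q ^ k) q (n - k) := by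
      rw [← qPoch_add]
      congr 1
      omega
    rw [hsplit, mul_inv]
    have hzk : ‖z * q ^ k‖ < 1 := by
      rw [norm_mul, norm_pow]
      calc ‖z‖ * ‖q‖ ^ k ≤ ‖z‖ * 1 := by
            exact mul_le_mul_of_nonneg_left (pow_le_one₀ (norm_nonneg q) hq.le)
              (norm_nonneg z)
        _ = ‖z‖ := by ring
        _ < 1 := hz
    have h2 := qPoch_ne_zero hzk hq (n - k)
    have h3 := hzn k
    field_simp
  rw [Finset.sum_congr rfl step, ← Finset.sum_mul, Gsum hq n z, one_mul]

end FiniteIdentity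

section PtnBasic

variable {q : ℂ}

lemma size_eq_sum (L : Ptn) {N : ℕ} (hN : ∀ i, N ≤ i → L.1 i = 0) :
    L.size = ∑ i ∈ Finset.range N, L.1 i :=
  tsum_eq_sum (fun b hb => hN b (le_of_not_gt (fun h => hb (Finset.mem_range.2 h))))

lemma nfun_eq_sum (L : Ptn) {N : ℕ} (hN : ∀ i, N ≤ i → L.1 i = 0) :
    L.nfun = ∑ i ∈ Finset.range N, Nat.choose (L.1 i) 2 :=
  tsum_eq_sum (fun b hb => by
    rw [hN b (le_of_not_gt (fun h => hb (Finset.mem_range.2 h)))]; rfl)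

/-- The denominator product `∏' i (q)_{λ_i - λ_{i+1}}`. -/
noncomputable def dprod (q : ℂ) (L : Ptn) : ℂ :=
  ∏' i : ℕ, qPoch q q (L.1 i - L.1 (i + 1))

lemma dprod_eq_prod (L : Ptn) {N : ℕ} (hN : ∀ i, N ≤ i → L.1 i = 0) :
    dprod q L = ∏ i ∈ Finset.range N, qPoch q q (L.1 i - L.1 (i + 1)) :=
  tprod_eq_prod (fun b hb => by
    have hb' : N ≤ b := le_of_not_gt (fun h => hb (Finset.mem_range.2 h))
    rw [hN b hb', hN (b+1) (by omega)]
    rfl)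

lemma dprod_ne_zero (hq : ‖q‖ < 1) (L : Ptn) : dprod q L ≠ 0 := by
  obtain ⟨N, hN⟩ := L.2.2
  rw [dprod_eq_prod L hN]
  exact Finset.prod_ne_zero_iff.2 fun i _ => qq_ne_zero hq _

lemma qBinomP_eq (n : ℕ) (L : Ptn) :
    qBinomP q n L = if L.1 0 ≤ n then
      qPoch q q n / (qPoch q q (n - L.1 0) * dprod q L) else 0 := rfl

/-- Prepend a part `k` to a partition. -/
def pcons (k : ℕ) (M : Ptn) (h : M.1 0 ≤ k) : Ptn :=
  ⟨fun i => Nat.casesOn i k (fun j => M.1 j), by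
    apply antitone_nat_of_succ_le
    intro i
    cases i with
    | zero => exact h
    | succ j => exact M.2.1 (Nat.le_succ j), by
    obtain ⟨N, hN⟩ := M.2.2
    exact ⟨N + 1, fun i hi => by
      cases i with
      | zero => omega
      | succ j => exact hN j (by omega)⟩⟩

@[simp] lemma pcons_zero (k : ℕ) (M : Ptn) (h : M.1 0 ≤ k) : (pcons k M h).1 0 = k := rfl
@[simp] lemma pcons_succ (k : ℕ) (M : Ptn) (h : M.1 0 ≤ k) (i : ℕ) :
    (pcons k M h).1 (i + 1) = M.1 i := rfl

lemma pcons_bound (k : ℕ) (M : Ptn) (h : M.1 0 ≤ k) {N : ℕ}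
    (hN : ∀ i, N ≤ i → M.1 i = 0) : ∀ i, N + 1 ≤ i → (pcons k M h).1 i = 0 := by
  intro i hi
  cases i with
  | zero => omega
  | succ j => exact hN j (by omega)

lemma size_pcons (k : ℕ) (M : Ptn) (h : M.1 0 ≤ k) :
    (pcons k M h).size = k + M.size := by
  obtain ⟨N, hN⟩ := M.2.2
  rw [size_eq_sum _ (pcons_bound k M h hN), size_eq_sum M hN, Finset.sum_range_succ']
  simp [Nat.add_comm]

lemma nfun_pcons (k : ℕ) (M : Ptn) (h : M.1 0 ≤ k) :
    (pcons k M h).nfun = Nat.choose k 2 + M.nfun := by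
  obtain ⟨N, hN⟩ := M.2.2
  rw [nfun_eq_sum _ (pcons_bound k M h hN), nfun_eq_sum M hN, Finset.sum_range_succ']
  simp [Nat.add_comm]

lemma dprod_pcons (k : ℕ) (M : Ptn) (h : M.1 0 ≤ k) :
    dprod q (pcons k M h) = qPoch q q (k - M.1 0) * dprod q M := by
  obtain ⟨N, hN⟩ := M.2.2
  rw [dprod_eq_prod _ (pcons_bound k M h hN), dprod_eq_prod M hN, Finset.prod_range_succ']
  rw [mul_comm]
  rfl

/-- Drop the first part of a partition. -/
def ptail (L : Ptn) : Ptn :=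
  ⟨fun i => L.1 (i + 1), fun a b hab => L.2.1 (by omega), by
    obtain ⟨N, hN⟩ := L.2.2
    exact ⟨N, fun i hi => hN (i+1) (by omega)⟩⟩

/-- Partitions are in bijection with pairs (first part, tail). -/
noncomputable def consEquiv : {p : ℕ × Ptn // p.2.1 0 ≤ p.1} ≃ Ptn where
  toFun p := pcons p.1.1 p.1.2 p.2
  invFun L := ⟨(L.1 0, ptail L), L.2.1 (Nat.zero_le 1)⟩
  left_inv p := by
    apply Subtype.ext
    apply Prod.ext
    · rfl
    · apply Subtype.ext
      funext i
      rfl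
  right_inv L := by
    apply Subtype.ext
    funext i
    cases i with
    | zero => rfl
    | succ j => rfl

/-- The zero partition. -/
def pzero : Ptn := ⟨fun _ => 0, fun _ _ _ => le_refl 0, ⟨0, fun _ _ => rfl⟩⟩

@[simp] lemma size_pzero : pzero.size = 0 := by
  rw [size_eq_sum pzero (N := 0) (fun _ _ => rfl)]; rfl

@[simp] lemma nfun_pzero : pzero.nfun = 0 := by
  rw [nfun_eq_sum pzero (N := 0) (fun _ _ => rfl)]; rfl

@[simp] lemma dprod_pzero : dprod q pzero = 1 := by
  rw [dprod_eq_prod pzero (N := 0) (fun _ _ => rfl)]; rfl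

lemma eq_pzero_of_head_zero {L : Ptn} (h : L.1 0 = 0) : L = pzero := by
  apply Subtype.ext
  funext i
  have := L.2.1 (Nat.zero_le i)
  simp only [h] at this
  simpa [pzero] using Nat.le_zero.1 this

lemma qBinomP_pzero (hq : ‖q‖ < 1) (n : ℕ) : qBinomP q n pzero = 1 := by
  rw [qBinomP_eq]
  have h1 : (pzero : Ptn).1 0 = 0 := rfl
  rw [h1, if_pos (Nat.zero_le n)]
  rw [(dprod_pzero : dprod q pzero = 1), Nat.sub_zero, mul_one, div_self (qq_ne_zero hq n)]

end PtnBasic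

section Summability

variable {q z : ℂ}

/-- The term of the Hall sum. -/
noncomputable def fterm (q z : ℂ) (n : ℕ) (L : Ptn) : ℂ :=
  z ^ L.size * q ^ (2 * L.nfun) * qBinomP q n L

/-- `cnum L v` = number of parts of `L` that are `> v` (conjugate partition count). -/
noncomputable def cnum (L : Ptn) (v : ℕ) : ℕ := sInf {i | L.1 i ≤ v}

lemma cnum_spec (L : Ptn) (v i : ℕ) : L.1 i ≤ v ↔ cnum L v ≤ i := by
  obtain ⟨N, hN⟩ := L.2.2
  have hne : {i | L.1 i ≤ v}.Nonempty := ⟨N, by simp [hN N le_rfl]⟩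
  constructor
  · intro h
    exact Nat.sInf_le h
  · intro h
    have hmem : L.1 (cnum L v) ≤ v := Nat.sInf_mem hne
    exact le_trans (L.2.1 h) hmem

lemma cnum_lt_iff (L : Ptn) (v i : ℕ) : i < cnum L v ↔ v < L.1 i := by
  rw [← not_le, ← not_le, cnum_spec]

lemma filter_lt_card {m n : ℕ} (h : m ≤ n) :
    ((Finset.range n).filter (fun v => v < m)).card = m := by
  have : (Finset.range n).filter (fun v => v < m) = Finset.range m := by
    ext x
    simp only [Finset.mem_filter, Finset.mem_range]
    omega
  rw [this, Finset.card_range]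

lemma recover (L : Ptn) {n : ℕ} (hL : L.1 0 ≤ n) (i : ℕ) :
    L.1 i = ((Finset.range n).filter (fun v => i < cnum L v)).card := by
  have h1 : (Finset.range n).filter (fun v => i < cnum L v)
      = (Finset.range n).filter (fun v => v < L.1 i) := by
    apply Finset.filter_congr
    intro v _
    simp [cnum_lt_iff]
  rw [h1, filter_lt_card (le_trans (L.2.1 (Nat.zero_le i)) hL)]

lemma cnum_le_bound (L : Ptn) {N : ℕ} (hN : ∀ i, N ≤ i → L.1 i = 0) (v : ℕ) :
    cnum L v ≤ N := by
  rw [← cnum_spec, hN N le_rfl]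
  exact Nat.zero_le v

lemma size_eq_sum_cnum (L : Ptn) {n : ℕ} (hL : L.1 0 ≤ n) :
    L.size = ∑ v ∈ Finset.range n, cnum L v := by
  obtain ⟨N, hN⟩ := L.2.2
  rw [size_eq_sum L hN]
  have step1 : ∀ v ∈ Finset.range n, cnum L v
      = ∑ i ∈ Finset.range N, if i < cnum L v then 1 else 0 := by
    intro v _
    rw [Finset.sum_boole]
    have : (Finset.range N).filter (fun i => i < cnum L v) = Finset.range (cnum L v) := by
      ext x
      simp only [Finset.mem_filter, Finset.mem_range]
      have := cnum_le_bound L hN v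
      omega
    rw [this]
    simp
  rw [Finset.sum_congr rfl step1, Finset.sum_comm]
  refine Finset.sum_congr rfl fun i _ => ?_
  have step2 : ∀ v ∈ Finset.range n, (if i < cnum L v then (1:ℕ) else 0)
      = if v < L.1 i then 1 else 0 := by
    intro v _
    simp [cnum_lt_iff]
  rw [Finset.sum_congr rfl step2, Finset.sum_boole,
    filter_lt_card (le_trans (L.2.1 (Nat.zero_le i)) hL)]
  simp

lemma sum_range_dd (L : Ptn) (N : ℕ) :
    ∑ i ∈ Finset.range N, (L.1 i - L.1 (i+1)) = L.1 0 - L.1 N := by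
  induction N with
  | zero => simp
  | succ m ih =>
    rw [Finset.sum_range_succ, ih]
    have h1 : L.1 (m+1) ≤ L.1 m := L.2.1 (Nat.le_succ m)
    have h2 : L.1 m ≤ L.1 0 := L.2.1 (Nat.zero_le m)
    omega

/-- Summability of the multi-geometric series on `Fin n → ℕ`. -/
lemma summable_multigeom {r : ℝ} (hr0 : 0 ≤ r) (hr1 : r < 1) (n : ℕ) :
    Summable (fun x : Fin n → ℕ => ∏ v, r ^ x v) := by
  induction n with
  | zero =>
    exact (summable_of_finite_support (Set.toFinite _))
  | succ m ih =>
    have hgeo : Summable (fun k : ℕ => r ^ k) := summable_geometric_of_lt_one hr0 hr1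
    have hmul := hgeo.mul_of_nonneg ih (fun k => pow_nonneg hr0 k)
      (fun x => Finset.prod_nonneg fun v _ => pow_nonneg hr0 _)
    have := (Fin.consEquiv (fun _ : Fin (m+1) => ℕ)).symm.summable_iff (f := fun p : ℕ × (Fin m → ℕ) =>
      r ^ p.1 * ∏ v, r ^ p.2 v)
    rw [← this] at hmul
    convert hmul using 1
    funext x
    simp only [Function.comp]
    rw [Fin.prod_univ_succ]
    rfl

variable (hq : ‖q‖ < 1) (hz : ‖z‖ < 1)

/-- A uniform positive lower bound for small q-Pochhammer values. -/
lemma exists_cbound (hq : ‖q‖ < 1) (n : ℕ) :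
    ∃ c : ℝ, 0 < c ∧ c ≤ 1 ∧ ∀ m, m ≤ n → c ≤ ‖qPoch q q m‖ := by
  obtain ⟨m0, _, hmin⟩ := Finset.exists_min_image (Finset.range (n+1))
    (fun m => ‖qPoch q q m‖) ⟨0, by simp⟩
  refine ⟨min 1 (‖qPoch q q m0‖), lt_min one_pos
    (norm_pos_iff.mpr (qq_ne_zero hq m0)), min_le_left _ _, fun m hm => ?_⟩
  exact le_trans (min_le_right _ _) (hmin m (Finset.mem_range.2 (by omega)))

lemma dprod_lower_bound {c : ℝ} {n : ℕ} (hc0 : 0 < c) (hc1 : c ≤ 1)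
    (hcb : ∀ m, m ≤ n → c ≤ ‖qPoch q q m‖) (L : Ptn) (hL : L.1 0 ≤ n) :
    c ^ n ≤ ‖dprod q L‖ := by
  obtain ⟨N, hN⟩ := L.2.2
  rw [dprod_eq_prod L hN, norm_prod]
  set s := (Finset.range N).filter (fun i => L.1 i - L.1 (i+1) ≠ 0) with hs
  have hprod : ∏ i ∈ Finset.range N, ‖qPoch q q (L.1 i - L.1 (i+1))‖
      = ∏ i ∈ s, ‖qPoch q q (L.1 i - L.1 (i+1))‖ := by
    rw [hs]
    refine (Finset.prod_filter_of_ne ?_).symm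
    intro x _ hx
    intro h0
    apply hx
    rw [h0]
    simp [qPoch_zero]
  have hcard : s.card ≤ n := by
    have h1 : s.card • 1 ≤ ∑ i ∈ s, (L.1 i - L.1 (i+1)) := by
      apply Finset.card_nsmul_le_sum
      intro x hx
      rw [hs, Finset.mem_filter] at hx
      omega
    have h2 : ∑ i ∈ s, (L.1 i - L.1 (i+1)) ≤ ∑ i ∈ Finset.range N, (L.1 i - L.1 (i+1)) :=
      Finset.sum_le_sum_of_subset (Finset.filter_subset _ _)
    rw [sum_range_dd] at h2
    simp only [smul_eq_mul, mul_one] at h1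
    omega
  have hstep : c ^ s.card ≤ ∏ i ∈ s, ‖qPoch q q (L.1 i - L.1 (i+1))‖ := by
    rw [← Finset.prod_const]
    apply Finset.prod_le_prod (fun _ _ => hc0.le)
    intro i hi
    apply hcb
    have h3 : L.1 i - L.1 (i+1) ≤ L.1 0 := by
      have := L.2.1 (Nat.zero_le i)
      omega
    omega
  calc c ^ n ≤ c ^ s.card := pow_le_pow_of_le_one hc0.le hc1 hcard
    _ ≤ _ := hstep
    _ = _ := (hprod).symm

lemma qBinomP_bound (hq : ‖q‖ < 1) (n : ℕ) :
    ∃ K : ℝ, 0 ≤ K ∧ ∀ L : Ptn, ‖qBinomP q n L‖ ≤ K := by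
  obtain ⟨c, hc0, hc1, hcb⟩ := exists_cbound hq n
  refine ⟨‖qPoch q q n‖ / (c * c ^ n), by positivity, fun L => ?_⟩
  rw [qBinomP_eq]
  by_cases hL : L.1 0 ≤ n
  · rw [if_pos hL, norm_div, norm_mul]
    apply div_le_div_of_nonneg_left (norm_nonneg _) (by positivity)
    apply mul_le_mul (hcb _ (by omega)) (dprod_lower_bound hc0 hc1 hcb L hL)
      (by positivity) (norm_nonneg _)
  · rw [if_neg hL]
    simp
    positivity

lemma fterm_summable (hq : ‖q‖ < 1) (hz : ‖z‖ < 1) (n : ℕ) :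
    Summable (fterm q z n) := by
  obtain ⟨K, hK0, hKb⟩ := qBinomP_bound hq n
  set r : ℝ := ‖z‖ with hr
  have hr0 : 0 ≤ r := norm_nonneg z
  set S : Set Ptn := {L | L.1 0 ≤ n} with hS
  set g : Ptn → ℝ := S.indicator (fun L => K * r ^ L.size) with hg
  have hbound : ∀ L : Ptn, ‖fterm q z n L‖ ≤ g L := by
    intro L
    by_cases hL : L.1 0 ≤ n
    · rw [hg, Set.indicator_of_mem (by exact hL)]
      rw [fterm, norm_mul, norm_mul, norm_pow, norm_pow]
      calc ‖z‖ ^ L.size * ‖q‖ ^ (2 * L.nfun) * ‖qBinomP q n L‖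
          ≤ r ^ L.size * 1 * K := by
            apply mul_le_mul (mul_le_mul le_rfl
              (pow_le_one₀ (norm_nonneg q) hq.le) (by positivity) (by positivity))
              (hKb L) (norm_nonneg _) (by positivity)
        _ = K * r ^ L.size := by ring
    · have hz0 : fterm q z n L = 0 := by
        rw [fterm, qBinomP_eq, if_neg hL, mul_zero]
      rw [hz0, hg, Set.indicator_of_notMem (by exact hL)]
      simp
  apply Summable.of_norm
  apply Summable.of_nonneg_of_le (fun L => norm_nonneg _) hbound
  rw [hg, ← summable_subtype_iff_indicator]
  have hinj : Function.Injective
      (fun (L : S) => (fun v : Fin n => cnum L.1 v.1)) := by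
    intro L M h
    apply Subtype.ext
    apply Subtype.ext
    funext i
    rw [recover L.1 L.2 i, recover M.1 M.2 i]
    congr 1
    apply Finset.filter_congr
    intro v hv
    rw [Finset.mem_range] at hv
    have := congrFun h (⟨v, hv⟩ : Fin n)
    simp only at this
    rw [this]
  have hsum := ((summable_multigeom hr0 hz n).mul_left K).comp_injective hinj
  convert hsum using 1
  · rfl
  funext L
  simp only [Function.comp]
  rw [← Finset.prod_range (fun v => r ^ cnum L.1 v), Finset.prod_pow_eq_pow_sum,
    ← size_eq_sum_cnum L.1 L.2]

end Summability

section Main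

variable {q z : ℂ}

lemma fterm_pcons (hq : ‖q‖ < 1) (n k : ℕ) (M : Ptn) (h : M.1 0 ≤ k) :
    fterm q z n (pcons k M h)
      = (z ^ k * q ^ (2 * Nat.choose k 2) * (if k ≤ n then qb q n k else 0))
        * fterm q z k M := by
  have hqb : qBinomP q n (pcons k M h)
      = (if k ≤ n then qb q n k else 0) * qBinomP q k M := by
    rw [qBinomP_eq, qBinomP_eq, pcons_zero]
    rw [show (dprod q (pcons k M h)) = qPoch q q (k - M.1 0) * dprod q M from dprod_pcons k M h]
    rw [if_pos h]
    by_cases hkn : k ≤ n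
    · rw [if_pos hkn, if_pos hkn, qb]
      have h1 := qq_ne_zero hq (n - k)
      have h2 := qq_ne_zero hq k
      have h3 := qq_ne_zero hq (k - M.1 0)
      have h4 := dprod_ne_zero hq M
      field_simp
    · rw [if_neg hkn, if_neg hkn, zero_mul]
  rw [fterm, fterm, hqb, size_pcons, nfun_pcons, pow_add]
  rw [show 2 * (Nat.choose k 2 + M.nfun) = 2 * Nat.choose k 2 + 2 * M.nfun by ring, pow_add]
  ring

lemma dprod_def_eq (L : Ptn) :
    (∏' i : ℕ, qPoch q q (L.1 i - L.1 (i + 1))) = dprod q L := rfl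

/-- The main computation. -/
lemma hall_S (hq : ‖q‖ < 1) (hz : ‖z‖ < 1) :
    ∀ n : ℕ, ∑' L : Ptn, fterm q z n L = (qPoch z q n)⁻¹ := by
  intro n
  induction n using Nat.strong_induction_on with
  | _ n ih =>
    -- the coefficient
    set coef : ℕ → ℂ := fun k => z ^ k * q ^ (2 * Nat.choose k 2) * (if k ≤ n then qb q n k else 0)
      with hcoef
    set F : ℕ × Ptn → ℂ := fun p => coef p.1 * fterm q z p.1 p.2 with hF
    set S : Set (ℕ × Ptn) := {p | p.2.1 0 ≤ p.1} with hSdef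
    -- F vanishes off S
    have hFvanish : ∀ p : ℕ × Ptn, p ∉ S → F p = 0 := by
      intro p hp
      have : ¬ p.2.1 0 ≤ p.1 := hp
      rw [hF]
      simp only
      rw [fterm, qBinomP_eq, if_neg this, mul_zero, mul_zero]
    have hFcons : ∀ p : {p : ℕ × Ptn // p.2.1 0 ≤ p.1}, F p.1 = fterm q z n (consEquiv p) := by
      rintro ⟨⟨k, M⟩, hkM⟩
      exact (fterm_pcons hq n k M hkM).symm
    -- step 1 : identify the two tsums
    have step1 : ∑' L : Ptn, fterm q z n L = ∑' p : ℕ × Ptn, F p := by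
      rw [← consEquiv.tsum_eq (fterm q z n)]
      have e1 : ∑' p : {p : ℕ × Ptn // p.2.1 0 ≤ p.1}, fterm q z n (consEquiv p)
          = ∑' p : S, F p.1 := by
        apply tsum_congr
        intro p
        rw [hFcons p]
      rw [e1, tsum_subtype S F]
      apply tsum_congr
      intro p
      by_cases hp : p ∈ S
      · rw [Set.indicator_of_mem hp]
      · rw [Set.indicator_of_notMem hp, hFvanish p hp]
    -- summability of F
    have hFsum : Summable F := by
      have h1 : Summable (F ∘ (Subtype.val : S → ℕ × Ptn)) := by
        have : F ∘ (Subtype.val : S → ℕ × Ptn) = fterm q z n ∘ consEquiv := by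
          funext p
          exact hFcons p
        rw [this]
        exact consEquiv.summable_iff.2 (fterm_summable hq hz n)
      rw [summable_subtype_iff_indicator] at h1
      have h2 : S.indicator F = F := by
        funext p
        by_cases hp : p ∈ S
        · rw [Set.indicator_of_mem hp]
        · rw [Set.indicator_of_notMem hp, hFvanish p hp]
      rwa [h2] at h1
    -- step 2 : Fubini
    have step2 : ∑' p : ℕ × Ptn, F p = ∑' k : ℕ, coef k * ∑' M : Ptn, fterm q z k M := by
      rw [Summable.tsum_prod hFsum]
      apply tsum_congr
      intro k
      simp only [hF]
      exact tsum_mul_left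
    -- step 3 : finite sum
    have step3 : ∑' k : ℕ, coef k * ∑' M : Ptn, fterm q z k M
        = ∑ k ∈ Finset.range (n+1), coef k * ∑' M : Ptn, fterm q z k M := by
      apply tsum_eq_sum
      intro k hk
      rw [Finset.mem_range] at hk
      have : ¬ k ≤ n := by omega
      rw [hcoef]
      simp only [if_neg this, mul_zero, zero_mul]
    have main : ∑' L : Ptn, fterm q z n L
        = ∑ k ∈ Finset.range (n+1), coef k * ∑' M : Ptn, fterm q z k M := by
      rw [step1, step2, step3]
    -- now split by n
    rcases Nat.eq_zero_or_pos n with hn0 | hnpos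
    · subst hn0
      rw [show qPoch z q 0 = 1 from rfl, inv_one]
      rw [tsum_eq_single pzero ?side]
      · rw [fterm, size_pzero, nfun_pzero, qBinomP_pzero hq 0]
        simp
      · intro L hL
        rw [fterm, qBinomP_eq]
        have : ¬ L.1 0 ≤ 0 := by
          intro h
          exact hL (eq_pzero_of_head_zero (Nat.le_zero.1 h))
        rw [if_neg this, mul_zero]
    · -- n ≥ 1
      have hfin := finite_identity hq hz n
      have hcoef_eq : ∀ k ∈ Finset.range (n+1),
          qb q n k * q ^ (2 * Nat.choose k 2) * z ^ k * (qPoch z q k)⁻¹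
          = coef k * (qPoch z q k)⁻¹ := by
        intro k hk
        rw [Finset.mem_range] at hk
        rw [hcoef]
        simp only [if_pos (by omega : k ≤ n)]
        ring
      rw [Finset.sum_congr rfl hcoef_eq] at hfin
      rw [Finset.sum_range_succ] at hfin main
      have hih : ∀ k ∈ Finset.range n, coef k * ∑' M : Ptn, fterm q z k M
          = coef k * (qPoch z q k)⁻¹ := by
        intro k hk
        rw [Finset.mem_range] at hk
        rw [ih k hk]
      rw [Finset.sum_congr rfl hih] at main
      -- let A = tsum at n, B = inv at n
      set A := ∑' L : Ptn, fterm q z n L with hA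
      set B := (qPoch z q n)⁻¹ with hB
      -- main : A = Σ_{k<n} coef k * inv k + coef n * A
      -- hfin : Σ_{k<n} coef k * inv k + coef n * B = B
      have hsub : A - coef n * A = B - coef n * B := by
        have e1 : A - coef n * A = ∑ k ∈ Finset.range n, coef k * (qPoch z q k)⁻¹ := by
          linear_combination main
        have e2 : B - coef n * B = ∑ k ∈ Finset.range n, coef k * (qPoch z q k)⁻¹ := by
          linear_combination -hfin
        rw [e1, e2]
      have hcn : ‖coef n‖ < 1 := by
        rw [hcoef]
        simp only [if_pos (le_refl n)]
        rw [norm_mul, norm_mul, norm_pow, norm_pow, qb_self hq, norm_one, mul_one]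
        calc ‖z‖ ^ n * ‖q‖ ^ (2 * Nat.choose n 2)
            ≤ ‖z‖ ^ n * 1 := by
              apply mul_le_mul_of_nonneg_left (pow_le_one₀ (norm_nonneg q) hq.le)
                (by positivity)
          _ = ‖z‖ ^ n := by ring
          _ < 1 := pow_lt_one₀ (norm_nonneg z) hz (by omega)
      have hne : (1 : ℂ) - coef n ≠ 0 := by
        intro h
        have : coef n = 1 := by linear_combination -h
        rw [this] at hcn
        simp at hcn
      have : (1 - coef n) * (A - B) = 0 := by linear_combination hsub
      rcases mul_eq_zero.1 this with h | h
      · exact absurd h hne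
      · exact sub_eq_zero.1 h

end Main

end HallAux

theorem hall_identity (q z : ℂ) (hq : ‖q‖ < 1) (hz : ‖z‖ < 1) (n : ℕ) :
    ∑' L : Ptn, z ^ L.size * q ^ (2 * L.nfun) * qBinomP q n L = (qPoch z q n)⁻¹ :=
  HallAux.hall_S hq hz n
end

section
/- Let q, z be complex numbers with |q| < 1 and |z| < 1, and let n ≥ 0 be an integer. Then Σ_{λ} z^{|λ|} q^{n(λ)} [n, λ] = (−z;q)_n / (z²;q)_n, where the sum is over all partitions λ (only those with λ₁ ≤ n contribute, by the convention on q-binomial coefficients). -/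
open scoped BigOperators Classical

/-! ### Basic facts about `qPoch` -/

lemma qPoch_zero (x q : ℂ) : qPoch x q 0 = 1 := by simp [qPoch]

lemma qPoch_succ (x q : ℂ) (n : ℕ) :
    qPoch x q (n+1) = qPoch x q n * (1 - x * q ^ n) := Finset.prod_range_succ _ _

lemma qPoch_succ' (x q : ℂ) (n : ℕ) :
    qPoch x q (n+1) = (1 - x) * qPoch (x*q) q n := by
  rw [qPoch, Finset.prod_range_succ']
  simp only [pow_zero, mul_one, qPoch]
  rw [mul_comm]
  congr 1
  apply Finset.prod_congr rfl
  intro j _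
  ring_nf

lemma qPoch_ne_zero {x q : ℂ} (h : ∀ j : ℕ, x * q ^ j ≠ 1) (n : ℕ) : qPoch x q n ≠ 0 := by
  rw [qPoch]
  apply Finset.prod_ne_zero_iff.2
  intro j _
  rw [sub_ne_zero]
  exact fun hh => h j hh.symm

lemma qPochQ_ne_zero {q : ℂ} (hq : ‖q‖ < 1) (n : ℕ) : qPoch q q n ≠ 0 := by
  apply qPoch_ne_zero
  intro j hj
  have : ‖q * q ^ j‖ < 1 := by
    rw [norm_mul, norm_pow]
    calc ‖q‖ * ‖q‖ ^ j ≤ ‖q‖ * 1 := by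
          apply mul_le_mul_of_nonneg_left _ (norm_nonneg q)
          exact pow_le_one₀ (norm_nonneg q) hq.le
      _ < 1 := by simpa using hq
  rw [hj] at this; simp at this

/-! ### The classical q-binomial coefficient and the q-Chu–Vandermonde identity -/

noncomputable def qb (q : ℂ) (n k : ℕ) : ℂ :=
  if k ≤ n then qPoch q q n / (qPoch q q (n - k) * qPoch q q k) else 0

lemma qb_zero {q : ℂ} (hq : ∀ m : ℕ, qPoch q q m ≠ 0) (n : ℕ) : qb q n 0 = 1 := by
  rw [qb, if_pos (Nat.zero_le n)]
  simp [qPoch_zero]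
  exact hq n

lemma qb_self {q : ℂ} (hq : ∀ m : ℕ, qPoch q q m ≠ 0) (n : ℕ) : qb q n n = 1 := by
  rw [qb, if_pos le_rfl]
  simp [qPoch_zero]
  exact hq n

lemma qb_of_gt {q : ℂ} {n k : ℕ} (h : n < k) : qb q n k = 0 := by
  rw [qb, if_neg (by omega)]

lemma qb_pascal {q : ℂ} (hq : ∀ m : ℕ, qPoch q q m ≠ 0) (n k : ℕ) :
    qb q (n+1) (k+1) = q ^ (k+1) * qb q n (k+1) + qb q n k := by
  rcases Nat.lt_or_ge k n with h | h
  · -- k < n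
    have hm : n - k = (n - k - 1) + 1 := by omega
    set m := n - k - 1 with hmdef
    rw [qb, if_pos (by omega), qb, if_pos (by omega), qb, if_pos (by omega)]
    have e1 : n + 1 - (k + 1) = m + 1 := by omega
    have e5 : n - (k+1) = m := by omega
    rw [e1, e5, hm, qPoch_succ q q n, qPoch_succ q q k, qPoch_succ q q m]
    have h1 := hq n
    have h2 := hq m
    have h3 := hq k
    have h4 : (1:ℂ) - q * q ^ k ≠ 0 := by
      have := hq (k+1); rw [qPoch_succ] at this
      exact right_ne_zero_of_mul this
    have h5 : (1:ℂ) - q * q ^ m ≠ 0 := by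
      have := hq (m+1); rw [qPoch_succ] at this
      exact right_ne_zero_of_mul this
    have key2 : (q:ℂ)^(k+1) = q * q ^ k := by ring
    have key3 : (q:ℂ)^(k+1) * (q * q ^ m) = q * q ^ n := by
      rw [show (q:ℂ)^(k+1) * (q * q^m) = q * (q^(k+1+m)) by ring]
      congr 2
      omega
    have huvw : q^(k+1) * (1 - q*q^m) + (1 - q*q^k) = 1 - q*q^n := by
      linear_combination key2 - key3
    have hcomb : q ^ (k+1) * (qPoch q q n / (qPoch q q m * (qPoch q q k * (1 - q * q ^ k))))
        + qPoch q q n / (qPoch q q m * (1 - q * q ^ m) * qPoch q q k)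
        = qPoch q q n * (q^(k+1) * (1 - q*q^m) + (1 - q*q^k))
          / (qPoch q q m * (1 - q * q ^ m) * (qPoch q q k * (1 - q * q ^ k))) := by
      field_simp
    rw [hcomb, huvw]
  · rcases Nat.eq_or_lt_of_le h with h' | h'
    · subst h'
      rw [qb_self hq, qb_of_gt (by omega), qb_self hq]
      ring
    · rw [qb_of_gt (by omega), qb_of_gt (by omega), qb_of_gt (by omega)]
      ring

lemma choose_two_succ (k : ℕ) : Nat.choose (k+1) 2 = Nat.choose k 2 + k := by
  rw [Nat.choose_succ_succ]
  simp [Nat.choose_one_right, Nat.add_comm]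

lemma chu_pointwise {q a b c : ℂ} (habc : c = a * b)
    (hc : ∀ j : ℕ, (1:ℂ) - c * q ^ j ≠ 0) (k : ℕ) :
    q ^ k * (qPoch a q k * (-1:ℂ)^k * q^(Nat.choose k 2) * b^k / qPoch c q k)
      + qPoch a q (k+1) * (-1:ℂ)^(k+1) * q^(Nat.choose (k+1) 2) * b^(k+1) / qPoch c q (k+1)
    = (1-b)/(1-c) * (qPoch a q k * (-1:ℂ)^k * q^(Nat.choose k 2) * (b*q)^k / qPoch (c*q) q k) := by
  have hPc : ∀ m : ℕ, qPoch c q m ≠ 0 := by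
    intro m
    apply qPoch_ne_zero
    intro j hj
    exact hc j (by rw [hj]; ring)
  have h1c : (1:ℂ) - c ≠ 0 := by simpa using hc 0
  have hcq : qPoch (c*q) q k = qPoch c q (k+1) / (1-c) := by
    rw [qPoch_succ' c q k]
    field_simp
  rw [hcq, choose_two_succ, qPoch_succ a q k, qPoch_succ c q k]
  have hck : (1:ℂ) - c * q ^ k ≠ 0 := hc k
  have hPck := hPc k
  subst habc
  have hck' : (1:ℂ) - q^k*a*b ≠ 0 := by rw [show q^k*a*b = a*b*q^k by ring]; exact hck
  field_simp
  ring

lemma chu {q a : ℂ} (hq : ∀ m : ℕ, qPoch q q m ≠ 0) :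
    ∀ (n : ℕ) (b c : ℂ), c = a * b → (∀ j : ℕ, (1:ℂ) - c * q ^ j ≠ 0) →
    ∑ k ∈ Finset.range (n+1),
        qb q n k * (qPoch a q k * (-1:ℂ)^k * q^(Nat.choose k 2) * b^k / qPoch c q k)
      = qPoch b q n / qPoch c q n := by
  intro n
  induction n with
  | zero =>
    intro b c habc hc
    simp [qb_zero hq, qPoch_zero]
  | succ n IH =>
    intro b c habc hc
    have hc' : ∀ j : ℕ, (1:ℂ) - (c*q) * q ^ j ≠ 0 := by
      intro j
      have := hc (j+1)
      rw [show c * q ^ (j+1) = (c*q) * q^j by ring] at this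
      exact this
    set u : ℕ → ℂ := fun k =>
      qPoch a q k * (-1:ℂ)^k * q^(Nat.choose k 2) * b^k / qPoch c q k with hu
    set u' : ℕ → ℂ := fun k =>
      qPoch a q k * (-1:ℂ)^k * q^(Nat.choose k 2) * (b*q)^k / qPoch (c*q) q k with hu'
    have step1 : ∑ k ∈ Finset.range (n+2), qb q (n+1) k * u k
        = ∑ k ∈ Finset.range (n+1), (q^(k+1) * qb q n (k+1) * u (k+1) + qb q n k * u (k+1)) + 1 := by
      rw [Finset.sum_range_succ']
      congr 1
      · apply Finset.sum_congr rfl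
        intro k _
        rw [qb_pascal hq]
        ring
      · rw [qb_zero hq]
        simp [hu, qPoch_zero]
    have step2 : ∑ k ∈ Finset.range (n+1), q^(k+1) * qb q n (k+1) * u (k+1) + 1
        = ∑ k ∈ Finset.range (n+1), qb q n k * (q^k * u k) := by
      rw [Finset.sum_range_succ' (fun k => qb q n k * (q^k * u k)) n]
      rw [Finset.sum_range_succ (fun k => q^(k+1) * qb q n (k+1) * u (k+1)) n]
      rw [qb_of_gt (by omega), qb_zero hq]
      simp only [pow_zero, mul_zero, zero_mul, add_zero]
      have : u 0 = 1 := by simp [hu, qPoch_zero]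
      rw [this]
      simp only [mul_one, one_mul]
      congr 1
      apply Finset.sum_congr rfl
      intro k _
      ring
    have step3 : ∑ k ∈ Finset.range (n+1), (q^(k+1) * qb q n (k+1) * u (k+1) + qb q n k * u (k+1)) + 1
        = ∑ k ∈ Finset.range (n+1), qb q n k * (q^k * u k + u (k+1)) := by
      rw [Finset.sum_add_distrib, add_right_comm, step2]
      rw [← Finset.sum_add_distrib]
      apply Finset.sum_congr rfl
      intro k _
      ring
    rw [step1, step3]
    have step4 : ∀ k ∈ Finset.range (n+1),
        qb q n k * (q^k * u k + u (k+1)) = (1-b)/(1-c) * (qb q n k * u' k) := by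
      intro k _
      rw [hu, hu']
      simp only
      rw [chu_pointwise habc hc k]
      ring
    rw [Finset.sum_congr rfl step4, ← Finset.mul_sum]
    rw [IH (b*q) (c*q) (by rw [habc]; ring) hc']
    rw [qPoch_succ' b q n, qPoch_succ' c q n]
    rw [div_mul_div_comm]

/-! ### Partition infrastructure -/

namespace Ptn

noncomputable def bnd (L : Ptn) : ℕ := L.2.2.choose

lemma bnd_spec (L : Ptn) : ∀ i, bnd L ≤ i → L.1 i = 0 := L.2.2.choose_spec

lemma apply_le_head (L : Ptn) (i : ℕ) : L.1 i ≤ L.1 0 := L.2.1 (Nat.zero_le i)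

lemma size_eq_sum (L : Ptn) {N : ℕ} (hN : ∀ i, N ≤ i → L.1 i = 0) :
    L.size = ∑ i ∈ Finset.range N, L.1 i := by
  apply tsum_eq_sum
  intro i hi
  exact hN i (by simpa using hi)

lemma nfun_eq_sum (L : Ptn) {N : ℕ} (hN : ∀ i, N ≤ i → L.1 i = 0) :
    L.nfun = ∑ i ∈ Finset.range N, Nat.choose (L.1 i) 2 := by
  apply tsum_eq_sum
  intro i hi
  rw [hN i (by simpa using hi)]
  simp

lemma tprod_diffs_eq (q : ℂ) (L : Ptn) {N : ℕ} (hN : ∀ i, N ≤ i → L.1 i = 0) :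
    (∏' i : ℕ, qPoch q q (L.1 i - L.1 (i + 1)))
      = ∏ i ∈ Finset.range N, qPoch q q (L.1 i - L.1 (i + 1)) := by
  apply tprod_eq_prod
  intro i hi
  rw [hN i (by simpa using hi), hN (i+1) (by simp at hi; omega)]
  simp [qPoch_zero]

/-- remove the first part -/
def shift (L : Ptn) : Ptn :=
  ⟨fun i => L.1 (i+1), fun a b h => L.2.1 (by omega),
    ⟨bnd L, fun i hi => bnd_spec L (i+1) (by omega)⟩⟩

/-- prepend a part `k` at least as large as the first part of `M` -/
def cons (k : ℕ) (M : Ptn) (h : M.1 0 ≤ k) : Ptn :=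
  ⟨fun i => Nat.casesOn i k (fun j => M.1 j), by
      intro a b hab
      match a, b with
      | 0, 0 => exact le_rfl
      | 0, (j+1) => exact le_trans (apply_le_head M j) h
      | (i+1), (j+1) => exact M.2.1 (by omega)
    , ⟨bnd M + 1, by
      intro i hi
      match i, hi with
      | (j+1), hi => exact bnd_spec M j (by omega)⟩⟩

lemma cons_zero (k : ℕ) (M : Ptn) (h : M.1 0 ≤ k) : (cons k M h).1 0 = k := rfl
lemma cons_succ (k : ℕ) (M : Ptn) (h : M.1 0 ≤ k) (i : ℕ) : (cons k M h).1 (i+1) = M.1 i := rfl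

noncomputable def consEquiv : (Σ k : ℕ, {M : Ptn // M.1 0 ≤ k}) ≃ Ptn where
  toFun p := cons p.1 p.2.1 p.2.2
  invFun L := ⟨L.1 0, shift L, L.2.1 (Nat.zero_le 1)⟩
  left_inv := by
    rintro ⟨k, ⟨M, hM⟩⟩
    show (⟨(cons k M hM).1 0, ⟨shift (cons k M hM), _⟩⟩ : Σ k : ℕ, {M : Ptn // M.1 0 ≤ k}) = _
    have h2 : shift (cons k M hM) = M := Subtype.ext (funext fun i => rfl)
    exact congrArg (fun s => (⟨k, s⟩ : Σ k : ℕ, {M : Ptn // M.1 0 ≤ k})) (Subtype.ext h2)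
  right_inv := by
    intro L
    apply Subtype.ext
    funext i
    match i with
    | 0 => rfl
    | (j+1) => rfl

lemma size_cons (k : ℕ) (M : Ptn) (h : M.1 0 ≤ k) :
    (cons k M h).size = k + M.size := by
  rw [size_eq_sum (cons k M h) (N := bnd M + 1) (fun i hi => by
    match i, hi with
    | (j+1), hi => exact bnd_spec M j (by omega))]
  rw [Finset.sum_range_succ' (fun i => (cons k M h).1 i) (bnd M)]
  rw [size_eq_sum M (N := bnd M) (bnd_spec M)]
  simp only [cons_succ, cons_zero]
  omega

lemma nfun_cons (k : ℕ) (M : Ptn) (h : M.1 0 ≤ k) :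
    (cons k M h).nfun = Nat.choose k 2 + M.nfun := by
  rw [nfun_eq_sum (cons k M h) (N := bnd M + 1) (fun i hi => by
    match i, hi with
    | (j+1), hi => exact bnd_spec M j (by omega))]
  rw [Finset.sum_range_succ' (fun i => Nat.choose ((cons k M h).1 i) 2) (bnd M)]
  rw [nfun_eq_sum M (N := bnd M) (bnd_spec M)]
  simp only [cons_succ, cons_zero]
  omega

lemma tprod_diffs_ne_zero {q : ℂ} (hq : ∀ m : ℕ, qPoch q q m ≠ 0) (L : Ptn) :
    (∏' i : ℕ, qPoch q q (L.1 i - L.1 (i + 1))) ≠ 0 := by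
  rw [tprod_diffs_eq q L (bnd_spec L)]
  exact Finset.prod_ne_zero_iff.2 (fun i _ => hq _)

lemma qBinomP_cons {q : ℂ} (hq : ∀ m : ℕ, qPoch q q m ≠ 0) (n k : ℕ) (M : Ptn)
    (h : M.1 0 ≤ k) :
    qBinomP q n (cons k M h) = qb q n k * qBinomP q k M := by
  set C := cons k M h with hC
  have hbndC : ∀ i, bnd M + 1 ≤ i → C.1 i = 0 := fun i hi => by
    match i, hi with
    | (j+1), hi => exact bnd_spec M j (by omega)
  have hdiff : (∏' i : ℕ, qPoch q q (C.1 i - C.1 (i + 1)))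
      = qPoch q q (k - M.1 0) * (∏' i : ℕ, qPoch q q (M.1 i - M.1 (i + 1))) := by
    rw [tprod_diffs_eq q C hbndC,
      Finset.prod_range_succ' (fun i => qPoch q q (C.1 i - C.1 (i+1))) (bnd M),
      tprod_diffs_eq q M (bnd_spec M), mul_comm]
    rfl
  have hC0 : C.1 0 = k := rfl
  by_cases hkn : k ≤ n
  · rw [qBinomP, qBinomP, hC0, if_pos hkn, if_pos h, hdiff, qb, if_pos hkn]
    have h1 := hq n
    have h2 := hq (n - k)
    have h3 := hq k
    have h4 := hq (k - M.1 0)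
    have h5 := tprod_diffs_ne_zero hq M
    field_simp
  · rw [qBinomP, hC0, if_neg hkn, qb, if_neg hkn, zero_mul]

lemma qBinomP_eq_zero {q : ℂ} {n : ℕ} {L : Ptn} (h : ¬ L.1 0 ≤ n) :
    qBinomP q n L = 0 := by rw [qBinomP, if_neg h]

end Ptn

/-! ### Counting and summability -/

lemma finset_eq_range_card {t : Finset ℕ} (h : ∀ a b : ℕ, a ≤ b → b ∈ t → a ∈ t) :
    t = Finset.range t.card := by
  ext i
  simp only [Finset.mem_range]
  constructor
  · intro hi
    have hsub : Finset.range (i+1) ⊆ t := by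
      intro a ha
      exact h a i (by simpa using Nat.lt_succ_iff.mp (Finset.mem_range.mp ha)) hi
    have := Finset.card_le_card hsub
    simpa using this
  · intro hi
    by_contra hni
    have hsub : t ⊆ Finset.range i := by
      intro b hb
      rw [Finset.mem_range]
      by_contra hbi
      exact hni (h i b (by omega) hb)
    have := Finset.card_le_card hsub
    simp at this
    omega

namespace Ptn

lemma cnt_set_finite (L : Ptn) (j : ℕ) : {i : ℕ | j + 1 ≤ L.1 i}.Finite := by
  apply Set.Finite.subset (Set.finite_Iio (bnd L))
  intro i hi
  simp only [Set.mem_setOf_eq] at hi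
  simp only [Set.mem_Iio]
  by_contra hc
  have := bnd_spec L i (by omega)
  omega

/-- number of parts of `L` that are `≥ j+1` -/
noncomputable def cnt (L : Ptn) (j : ℕ) : ℕ := {i : ℕ | j + 1 ≤ L.1 i}.ncard

lemma cnt_toFinset (L : Ptn) (j : ℕ) :
    cnt L j = ((cnt_set_finite L j).toFinset).card :=
  Set.ncard_eq_toFinset_card _ _

lemma mem_iff_lt_cnt (L : Ptn) (j i : ℕ) : j + 1 ≤ L.1 i ↔ i < cnt L j := by
  have hdc : ∀ a b : ℕ, a ≤ b → b ∈ (cnt_set_finite L j).toFinset →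
      a ∈ (cnt_set_finite L j).toFinset := by
    intro a b hab hb
    simp only [Set.Finite.mem_toFinset, Set.mem_setOf_eq] at *
    exact le_trans hb (L.2.1 hab)
  have := finset_eq_range_card hdc
  have hmem : (j + 1 ≤ L.1 i) ↔ i ∈ (cnt_set_finite L j).toFinset := by
    simp [Set.Finite.mem_toFinset]
  rw [hmem, this, Finset.mem_range, ← cnt_toFinset]

lemma size_eq_sum_cnt {n : ℕ} (L : Ptn) (hL : L.1 0 ≤ n) :
    L.size = ∑ j ∈ Finset.range n, cnt L j := by
  rw [size_eq_sum L (bnd_spec L)]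
  have hpart : ∀ i, L.1 i = ∑ j ∈ Finset.range n, if j + 1 ≤ L.1 i then 1 else 0 := by
    intro i
    rw [← Finset.card_filter]
    have : Finset.filter (fun j => j + 1 ≤ L.1 i) (Finset.range n) = Finset.range (L.1 i) := by
      ext j
      simp only [Finset.mem_filter, Finset.mem_range]
      constructor
      · intro ⟨_, hj⟩; omega
      · intro hj
        have := le_trans (apply_le_head L i) hL
        exact ⟨by omega, by omega⟩
    rw [this, Finset.card_range]
  calc ∑ i ∈ Finset.range (bnd L), L.1 i
      = ∑ i ∈ Finset.range (bnd L), ∑ j ∈ Finset.range n, if j + 1 ≤ L.1 i then 1 else 0 := by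
        apply Finset.sum_congr rfl; intro i _; exact hpart i
    _ = ∑ j ∈ Finset.range n, ∑ i ∈ Finset.range (bnd L), if j + 1 ≤ L.1 i then 1 else 0 :=
        Finset.sum_comm
    _ = ∑ j ∈ Finset.range n, cnt L j := by
        apply Finset.sum_congr rfl
        intro j _
        rw [← Finset.card_filter, cnt_toFinset]
        congr 1
        ext i
        simp only [Finset.mem_filter, Finset.mem_range, Set.Finite.mem_toFinset, Set.mem_setOf_eq]
        constructor
        · intro ⟨_, hj⟩; exact hj
        · intro hj
          refine ⟨?_, hj⟩
          by_contra hc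
          have := bnd_spec L i (by omega)
          omega

lemma cnt_injective (n : ℕ) :
    Function.Injective (fun L : {L : Ptn // L.1 0 ≤ n} => (fun j : Fin n => cnt L.1 j)) := by
  intro L L' hLL'
  have hcnt : ∀ j < n, cnt L.1 j = cnt L'.1 j := by
    intro j hj
    exact congrFun hLL' ⟨j, hj⟩
  apply Subtype.ext
  apply Subtype.ext
  funext i
  have key : ∀ (K : {L : Ptn // L.1 0 ≤ n}),
      K.1.1 i = (Finset.filter (fun j => i < cnt K.1 j) (Finset.range n)).card := by
    intro K
    have : Finset.filter (fun j => i < cnt K.1 j) (Finset.range n)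
        = Finset.range (K.1.1 i) := by
      ext j
      simp only [Finset.mem_filter, Finset.mem_range]
      rw [← mem_iff_lt_cnt]
      constructor
      · intro ⟨_, hj⟩; omega
      · intro hj
        have := le_trans (apply_le_head K.1 i) K.2
        exact ⟨by omega, by omega⟩
    rw [this, Finset.card_range]
  rw [key L, key L']
  congr 1
  apply Finset.filter_congr
  intro j hj
  simp only [Finset.mem_range] at hj
  rw [hcnt j hj]

lemma sum_range_diffs (L : Ptn) (N : ℕ) :
    ∑ i ∈ Finset.range N, (L.1 i - L.1 (i+1)) = L.1 0 - L.1 N := by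
  induction N with
  | zero => simp
  | succ N IH =>
    rw [Finset.sum_range_succ, IH]
    have h1 : L.1 (N+1) ≤ L.1 N := L.2.1 (by omega)
    have h2 : L.1 N ≤ L.1 0 := apply_le_head L N
    omega

end Ptn

lemma summable_pi_geom {r : ℝ} (h0 : 0 ≤ r) (h1 : r < 1) :
    ∀ n : ℕ, Summable (fun v : Fin n → ℕ => ∏ j, r ^ (v j)) := by
  intro n
  induction n with
  | zero => exact Summable.of_finite
  | succ n IH =>
    have hg : Summable (fun k : ℕ => r ^ k) := summable_geometric_of_lt_one h0 h1
    have base : Summable (fun p : ℕ × (Fin n → ℕ) => r ^ p.1 * ∏ j, r ^ (p.2 j)) := by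
      apply Summable.mul_of_nonneg hg IH (fun k => pow_nonneg h0 k)
      intro v
      exact Finset.prod_nonneg (fun _ _ => pow_nonneg h0 _)
    have hiff := ((Fin.consEquiv (fun _ => ℕ)).summable_iff
      (f := fun v : Fin (n+1) → ℕ => ∏ j, r ^ v j))
    apply hiff.1
    have heq : ((fun v : Fin (n+1) → ℕ => ∏ j, r ^ v j) ∘ (Fin.consEquiv (fun _ => ℕ)))
        = fun p : ℕ × (Fin n → ℕ) => r ^ p.1 * ∏ j, r ^ (p.2 j) := by
      funext p
      simp only [Function.comp_apply, Fin.prod_univ_succ,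
        Fin.cons_zero, Fin.cons_succ, Fin.consEquiv_apply]
    rw [heq]
    exact base

/-- the lower-bound constant `∏_{j<n} (1 - |q|^{j+1})` -/
noncomputable def cq (q : ℂ) (n : ℕ) : ℝ := ∏ j ∈ Finset.range n, (1 - ‖q‖ ^ (j+1))

section cqfacts
variable {q : ℂ}

lemma cq_pos (hq : ‖q‖ < 1) (n : ℕ) : 0 < cq q n := by
  apply Finset.prod_pos
  intro j _
  have : ‖q‖ ^ (j+1) < 1 := pow_lt_one₀ (norm_nonneg q) hq (by omega)
  linarith

lemma cq_le_one (hq : ‖q‖ < 1) (n : ℕ) : cq q n ≤ 1 := by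
  apply Finset.prod_le_one
  · intro j _
    have := cq_pos hq (j+1)
    have : ‖q‖ ^ (j+1) < 1 := pow_lt_one₀ (norm_nonneg q) hq (by omega)
    have h2 : (0:ℝ) ≤ ‖q‖ ^ (j+1) := pow_nonneg (norm_nonneg q) _
    linarith
  · intro j _
    have h2 : (0:ℝ) ≤ ‖q‖ ^ (j+1) := pow_nonneg (norm_nonneg q) _
    linarith

lemma cq_anti (hq : ‖q‖ < 1) {m n : ℕ} (h : m ≤ n) : cq q n ≤ cq q m := by
  induction n, h using Nat.le_induction with
  | base => exact le_rfl
  | succ n hmn IH =>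
    calc cq q (n+1) = cq q n * (1 - ‖q‖ ^ (n+1)) := Finset.prod_range_succ _ _
      _ ≤ cq q n * 1 := by
          apply mul_le_mul_of_nonneg_left _ (cq_pos hq n).le
          have h2 : (0:ℝ) ≤ ‖q‖ ^ (n+1) := pow_nonneg (norm_nonneg q) _
          linarith
      _ = cq q n := mul_one _
      _ ≤ cq q m := IH

lemma cq_le_norm_qPoch (hq : ‖q‖ < 1) (n : ℕ) : cq q n ≤ ‖qPoch q q n‖ := by
  rw [qPoch, norm_prod, cq]
  apply Finset.prod_le_prod
  · intro j _
    have : ‖q‖ ^ (j+1) < 1 := pow_lt_one₀ (norm_nonneg q) hq (by omega)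
    linarith
  · intro j _
    calc (1:ℝ) - ‖q‖ ^ (j+1) = ‖(1:ℂ)‖ - ‖q * q ^ j‖ := by
          rw [norm_one, norm_mul, norm_pow, pow_succ']
      _ ≤ ‖(1:ℂ) - q * q ^ j‖ := norm_sub_norm_le _ _

lemma cq_pow_le_norm_qPoch (hq : ‖q‖ < 1) {d n : ℕ} (hd : d ≤ n) :
    cq q n ^ d ≤ ‖qPoch q q d‖ := by
  match d with
  | 0 => simp [qPoch_zero]
  | (s+1) =>
    calc cq q n ^ (s+1) ≤ cq q n := by
          apply pow_le_of_le_one (cq_pos hq n).le (cq_le_one hq n) (by omega)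
      _ ≤ cq q (s+1) := cq_anti hq hd
      _ ≤ ‖qPoch q q (s+1)‖ := cq_le_norm_qPoch hq _
end cqfacts

namespace Ptn
lemma consEquiv_apply (k : ℕ) (M : {M : Ptn // M.1 0 ≤ k}) :
    consEquiv ⟨k, M⟩ = cons k M.1 M.2 := rfl
end Ptn

-- the norm bound
lemma norm_qBinomP_le {q : ℂ} (hq : ‖q‖ < 1) (n : ℕ) (L : Ptn) :
    ‖qBinomP q n L‖ ≤ ‖qPoch q q n‖ / cq q n ^ (n+1) := by
  by_cases hL : L.1 0 ≤ n
  · rw [qBinomP, if_pos hL, Ptn.tprod_diffs_eq q L (Ptn.bnd_spec L)]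
    rw [norm_div, norm_mul, norm_prod]
    apply div_le_div_of_nonneg_left (norm_nonneg _) (pow_pos (cq_pos hq n) _)
    have hA : cq q n ≤ ‖qPoch q q (n - L.1 0)‖ :=
      le_trans (cq_anti hq (by omega)) (cq_le_norm_qPoch hq _)
    have hB : cq q n ^ n ≤ ∏ i ∈ Finset.range (Ptn.bnd L), ‖qPoch q q (L.1 i - L.1 (i+1))‖ := by
      calc cq q n ^ n ≤ cq q n ^ (L.1 0) :=
            pow_le_pow_of_le_one (cq_pos hq n).le (cq_le_one hq n) hL
        _ = cq q n ^ (∑ i ∈ Finset.range (Ptn.bnd L), (L.1 i - L.1 (i+1))) := by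
            rw [Ptn.sum_range_diffs L (Ptn.bnd L), Ptn.bnd_spec L (Ptn.bnd L) le_rfl,
              Nat.sub_zero]
        _ = ∏ i ∈ Finset.range (Ptn.bnd L), cq q n ^ (L.1 i - L.1 (i+1)) :=
            (Finset.prod_pow_eq_pow_sum _ _ _).symm
        _ ≤ ∏ i ∈ Finset.range (Ptn.bnd L), ‖qPoch q q (L.1 i - L.1 (i+1))‖ := by
            apply Finset.prod_le_prod
            · intro i _; exact pow_nonneg (cq_pos hq n).le _
            · intro i _
              apply cq_pow_le_norm_qPoch hq
              have h1 := Ptn.apply_le_head L i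
              omega
    calc cq q n ^ (n+1) = cq q n * cq q n ^ n := by rw [pow_succ']
      _ ≤ ‖qPoch q q (n - L.1 0)‖ * ∏ i ∈ Finset.range (Ptn.bnd L), ‖qPoch q q (L.1 i - L.1 (i+1))‖ :=
          mul_le_mul hA hB (pow_nonneg (cq_pos hq n).le _) (norm_nonneg _)
  · rw [Ptn.qBinomP_eq_zero hL, norm_zero]
    apply div_nonneg (norm_nonneg _) (pow_nonneg (cq_pos hq n).le _)

noncomputable def FF (q z : ℂ) (n : ℕ) (L : Ptn) : ℂ :=
  z ^ L.size * q ^ L.nfun * qBinomP q n L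

lemma FF_eq_zero (q z : ℂ) {n : ℕ} {L : Ptn} (h : ¬ L.1 0 ≤ n) : FF q z n L = 0 := by
  rw [FF, Ptn.qBinomP_eq_zero h, mul_zero]

lemma summable_FF {q z : ℂ} (hq : ‖q‖ < 1) (hz : ‖z‖ < 1) (n : ℕ) :
    Summable (FF q z n) := by
  set S : Set Ptn := {L | L.1 0 ≤ n} with hS
  have hsub : Function.support (FF q z n) ⊆ S := by
    intro L hL
    by_contra hc
    exact hL (FF_eq_zero q z hc)
  have h2 : Summable ((FF q z n) ∘ (Subtype.val : S → Ptn)) := by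
    apply Summable.of_norm_bounded
      (g := fun L : S => (‖qPoch q q n‖ / cq q n ^ (n+1)) * ∏ j : Fin n, ‖z‖ ^ (Ptn.cnt L.1 j))
    · apply Summable.mul_left
      exact ((summable_pi_geom (norm_nonneg z) hz n).comp_injective (Ptn.cnt_injective n))
    · intro L
      have hL : L.1.1 0 ≤ n := L.2
      have e1 : ‖z‖ ^ L.1.size = ∏ j : Fin n, ‖z‖ ^ (Ptn.cnt L.1 j) := by
        rw [Ptn.size_eq_sum_cnt L.1 hL, ← Finset.prod_pow_eq_pow_sum, Finset.prod_range]
      calc ‖FF q z n L.1‖ = ‖z‖ ^ L.1.size * ‖q‖ ^ L.1.nfun * ‖qBinomP q n L.1‖ := by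
            rw [FF, norm_mul, norm_mul, norm_pow, norm_pow]
        _ ≤ ‖z‖ ^ L.1.size * 1 * (‖qPoch q q n‖ / cq q n ^ (n+1)) := by
            apply mul_le_mul
            · apply mul_le_mul_of_nonneg_left _ (pow_nonneg (norm_nonneg z) _)
              exact pow_le_one₀ (norm_nonneg q) hq.le
            · exact norm_qBinomP_le hq n L.1
            · exact norm_nonneg _
            · exact mul_nonneg (pow_nonneg (norm_nonneg z) _) zero_le_one
        _ = (‖qPoch q q n‖ / cq q n ^ (n+1)) * ∏ j : Fin n, ‖z‖ ^ (Ptn.cnt L.1 j) := by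
            rw [e1]; ring
  rw [summable_subtype_iff_indicator] at h2
  rwa [Set.indicator_eq_self.2 hsub] at h2

lemma GG_rec {q z : ℂ} (hq : ‖q‖ < 1) (hz : ‖z‖ < 1) (n : ℕ) :
    (∑' L : Ptn, FF q z n L)
      = ∑ k ∈ Finset.range (n+1),
          (z^k * q^(Nat.choose k 2) * qb q n k) * ∑' L : Ptn, FF q z k L := by
  have hqP : ∀ m, qPoch q q m ≠ 0 := qPochQ_ne_zero hq
  have hsum := summable_FF hq hz n
  have hsum2 : Summable ((FF q z n) ∘ Ptn.consEquiv) :=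
    (Ptn.consEquiv.summable_iff (f := FF q z n)).2 hsum
  trans (∑' (k : ℕ) (M : {M : Ptn // M.1 0 ≤ k}), ((FF q z n) ∘ Ptn.consEquiv) ⟨k, M⟩)
  · rw [← hsum2.tsum_sigma]
    exact (Ptn.consEquiv.tsum_eq (FF q z n)).symm
  · have inner : ∀ k : ℕ, (∑' M : {M : Ptn // M.1 0 ≤ k}, ((FF q z n) ∘ Ptn.consEquiv) ⟨k, M⟩)
        = (z^k * q^(Nat.choose k 2) * qb q n k) * ∑' L : Ptn, FF q z k L := by
      intro k
      have e2 : ∀ M : {M : Ptn // M.1 0 ≤ k},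
          ((FF q z n) ∘ Ptn.consEquiv) ⟨k, M⟩
            = (z^k * q^(Nat.choose k 2) * qb q n k) * FF q z k M.1 := by
        intro M
        show FF q z n (Ptn.consEquiv ⟨k, M⟩) = _
        rw [Ptn.consEquiv_apply k M, FF, FF, Ptn.size_cons, Ptn.nfun_cons,
          Ptn.qBinomP_cons hqP n k M.1 M.2, pow_add, pow_add]
        ring
      rw [tsum_congr e2, tsum_mul_left]
      congr 1
      exact tsum_subtype_eq_of_support_subset (fun L hL => by
        by_contra hc
        exact hL (FF_eq_zero q z hc))
    rw [tsum_congr inner]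
    apply tsum_eq_sum
    intro k hk
    rw [qb_of_gt (by simp at hk; omega), mul_zero, zero_mul]

lemma GG_zero {q z : ℂ} : (∑' L : Ptn, FF q z 0 L) = 1 := by
  set P0 : Ptn := ⟨fun _ => 0, fun a b _ => le_rfl, ⟨0, fun i _ => rfl⟩⟩ with hP0
  have hz0 : ∀ L : Ptn, L ≠ P0 → FF q z 0 L = 0 := by
    intro L hL
    apply FF_eq_zero
    intro hc
    apply hL
    apply Subtype.ext
    funext i
    have := Ptn.apply_le_head L i
    show L.1 i = 0
    omega
  rw [tsum_eq_single P0 hz0]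
  have hsize : P0.size = 0 := by
    rw [Ptn.size_eq_sum P0 (N := 0) (fun i _ => rfl)]; simp
  have hnfun : P0.nfun = 0 := by
    rw [Ptn.nfun_eq_sum P0 (N := 0) (fun i _ => rfl)]; simp
  have hqb : qBinomP q 0 P0 = 1 := by
    rw [qBinomP, if_pos le_rfl, Ptn.tprod_diffs_eq q P0 (N := 0) (fun i _ => rfl)]
    simp [qPoch_zero]
  rw [FF, hsize, hnfun, hqb]
  simp

lemma main_identity {q z : ℂ} (hq : ‖q‖ < 1) (hz : ‖z‖ < 1) :
    ∀ n : ℕ, (∑' L : Ptn, FF q z n L) = qPoch (-z) q n / qPoch (z^2) q n := by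
  have hqP : ∀ m, qPoch q q m ≠ 0 := qPochQ_ne_zero hq
  have hzq : ∀ j : ℕ, (1:ℂ) - z^2 * q^j ≠ 0 := by
    intro j
    have hn : ‖z^2 * q^j‖ < 1 := by
      rw [norm_mul, norm_pow, norm_pow]
      calc ‖z‖^2 * ‖q‖^j ≤ ‖z‖^2 * 1 :=
            mul_le_mul_of_nonneg_left (pow_le_one₀ (norm_nonneg q) hq.le)
              (pow_nonneg (norm_nonneg z) 2)
        _ = ‖z‖^2 := mul_one _
        _ < 1 := pow_lt_one₀ (norm_nonneg z) hz (by omega)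
    intro hc
    rw [sub_eq_zero] at hc
    rw [← hc] at hn
    simp at hn
  have hchu : ∀ n : ℕ, ∑ k ∈ Finset.range (n+1),
      (z^k * q^(Nat.choose k 2) * qb q n k) * (qPoch (-z) q k / qPoch (z^2) q k)
      = qPoch (-z) q n / qPoch (z^2) q n := by
    intro n
    have h := chu (a := -z) hqP n (-z) (z^2) (by ring) hzq
    rw [← h]
    apply Finset.sum_congr rfl
    intro k _
    have h3 : (-1:ℂ)^k * (-1)^k = 1 := by
      rw [← mul_pow]; norm_num
    rw [div_eq_mul_inv, div_eq_mul_inv]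
    linear_combination (-(z^k * q^(Nat.choose k 2) * qb q n k * qPoch (-z) q k
      * (qPoch (z^2) q k)⁻¹)) * h3
  intro n
  induction n using Nat.strong_induction_on with
  | _ n IH =>
    match n, IH with
    | 0, _ => rw [GG_zero]; simp [qPoch_zero]
    | (m+1), IH =>
      have hrec := GG_rec hq hz (m+1)
      have hch := hchu (m+1)
      rw [Finset.sum_range_succ] at hrec hch
      have hIH : ∑ k ∈ Finset.range (m+1),
            (z^k * q^(Nat.choose k 2) * qb q (m+1) k) * (∑' L : Ptn, FF q z k L)
          = ∑ k ∈ Finset.range (m+1),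
            (z^k * q^(Nat.choose k 2) * qb q (m+1) k)
              * (qPoch (-z) q k / qPoch (z^2) q k) := by
        apply Finset.sum_congr rfl
        intro k hk
        rw [IH k (by simp at hk; omega)]
      rw [qb_self hqP] at hrec hch
      have hw : (1:ℂ) - z^(m+1) * q^(Nat.choose (m+1) 2) ≠ 0 := by
        intro hc
        rw [sub_eq_zero] at hc
        have hn : ‖z^(m+1) * q^(Nat.choose (m+1) 2)‖ < 1 := by
          rw [norm_mul, norm_pow, norm_pow]
          calc ‖z‖^(m+1) * ‖q‖^(Nat.choose (m+1) 2) ≤ ‖z‖^(m+1) * 1 :=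
                mul_le_mul_of_nonneg_left (pow_le_one₀ (norm_nonneg q) hq.le)
                  (pow_nonneg (norm_nonneg z) _)
            _ = ‖z‖^(m+1) := mul_one _
            _ ≤ ‖z‖ := pow_le_of_le_one (norm_nonneg z) hz.le (by omega)
            _ < 1 := hz
        rw [← hc] at hn
        simp at hn
      have key : (1 - z^(m+1) * q^(Nat.choose (m+1) 2)) * (∑' L : Ptn, FF q z (m+1) L)
          = (1 - z^(m+1) * q^(Nat.choose (m+1) 2))
              * (qPoch (-z) q (m+1) / qPoch (z^2) q (m+1)) := by
        linear_combination hrec + hch + hIH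
      exact mul_left_cancel₀ hw key

theorem stembridge_identity (q z : ℂ) (hq : ‖q‖ < 1) (hz : ‖z‖ < 1)
    (n : ℕ) :
    ∑' L : Ptn, z ^ L.size * q ^ L.nfun * qBinomP q n L
      = qPoch (-z) q n / qPoch (z ^ 2) q n := by
  have hq' : ‖q‖ < 1 := hq
  have hz' : ‖z‖ < 1 := hz
  have h := main_identity hq' hz' n
  simp only [FF] at h
  exact h
end
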